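/- arXiv:2001.08377 — 4 statements merged into one kernel-verified Lean document; each statement's English description precedes it below -/
import Mathlib

section
/- Let A be a coherent ring with the Artin–Rees property with respect to an ideal m, and let Â be the m-adic completion of A. Then the canonical map A → Â is flat, and for every finitely generated ideal a ⊂ A, the extension aÂ equals the completion â (in particular aÂ is closed in Â). -/
/-- A ring is coherent if every finitely generated ideal is finitely presented. -/
def IsCoherentRing (A : Type*) [CommRing A] : Prop :=
  ∀ I : Ideal A, I.FG → Module.FinitePresentation A I

/-- A ring `A` has the Artin–Rees property with respect to an ideal `m` if every finitely
generated submodule `F` of a finitely generated free `A`-module satisfies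
`mⁿE ∩ F = m^{n-c}(m^cE ∩ F)` for all `n > c`, for some `c`. -/
def HasArtinReesProperty (A : Type*) [CommRing A] (m : Ideal A) : Prop :=
  ∀ (r : ℕ) (F : Submodule A (Fin r → A)), F.FG →
    ∃ c : ℕ, ∀ n : ℕ, n > c →
      (m ^ n • ⊤ : Submodule A (Fin r → A)) ⊓ F = m ^ (n - c) • ((m ^ c • ⊤) ⊓ F)

open LinearMap TensorProduct

namespace ARFlatProof

variable {R : Type*} [CommRing R] {I : Ideal R}
variable {M : Type*} [AddCommGroup M] [Module R M]
variable {N : Type*} [AddCommGroup N] [Module R N]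
variable {P : Type*} [AddCommGroup P] [Module R P]

open AdicCompletion

/-- Shift an Artin-Rees statement with strict inequality to one with `≥`. -/
lemma ar_shift {E : Type*} [AddCommGroup E] [Module R E] {F : Submodule R E} {c : ℕ}
    (h : ∀ n : ℕ, n > c → (I ^ n • ⊤ : Submodule R E) ⊓ F = I ^ (n - c) • ((I ^ c • ⊤) ⊓ F)) :
    ∀ n ≥ c + 1, (I ^ n • ⊤ : Submodule R E) ⊓ F
      = I ^ (n - (c + 1)) • ((I ^ (c + 1) • ⊤ : Submodule R E) ⊓ F) := by
  intro n hn
  rw [h n (by omega), h (c + 1) (by omega)]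
  have h1 : (c + 1) - c = 1 := by omega
  have h2 : n - (c + 1) + 1 = n - c := by omega
  rw [h1, pow_one, ← Submodule.smul_assoc, smul_eq_mul, ← pow_succ, h2]

/-- Port of `AdicCompletion.map_injective` with explicit Artin-Rees hypothesis. -/
theorem map_injective' (I : Ideal R) {f : M →ₗ[R] N} (hf : Function.Injective f)
    {k : ℕ}
    (hk : ∀ n ≥ k, (I ^ n • ⊤ : Submodule R N) ⊓ range f
      = I ^ (n - k) • ((I ^ k • ⊤ : Submodule R N) ⊓ range f)) :
    Function.Injective (AdicCompletion.map I f) := by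
  rw [← LinearMap.ker_eq_bot, LinearMap.ker_eq_bot']
  intro x
  apply AdicCompletion.induction_on I M x (fun a ↦ ?_)
  intro hx
  refine AdicCompletion.mk_zero_of _ _ _ ⟨42, fun n _ ↦ ⟨n + k, by omega, n, by omega, ?_⟩⟩
  rw [← Submodule.comap_map_eq_of_injective hf (I ^ n • ⊤ : Submodule R M),
    Submodule.map_smul'', Submodule.map_top]
  apply (Submodule.smul_mono le_rfl inf_le_right : I ^ n • (I ^ k • ⊤ ⊓ (range f)) ≤ _)
  nth_rw 1 [show n = n + k - k by omega]
  rw [← hk (n + k) (show n + k ≥ k by omega)]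
  exact ⟨by simpa using congrArg (fun x ↦ x.val (n + k)) hx, ⟨a (n + k), rfl⟩⟩

section Exact

private noncomputable def mapExactAuxDelta {f : M →ₗ[R] N}
    (hf : Function.Injective f) {k : ℕ}
    (hkn : ∀ n ≥ k, (I ^ n • ⊤ : Submodule R N) ⊓ LinearMap.range f
      = I ^ (n - k) • ((I ^ k • ⊤ : Submodule R N) ⊓ LinearMap.range f))
    (x : AdicCauchySequence I N) {n : ℕ} {d : N}
    (hdmem : d ∈ (I ^ (k + n + 1) • ⊤ : Submodule R N)) {y yₙ : M}
    (hd : f y = x (k + n + 1) - d) (hyₙ : f yₙ - x (k + n) ∈ (I ^ (k + n) • ⊤ : Submodule R N)) :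
    { d : (I ^ n • ⊤ : Submodule R M)
      | f (yₙ + d) - x (k + n + 1) ∈ (I ^ (k + n + 1) • ⊤ : Submodule R N) } :=
  have h : f (y - yₙ) ∈ (I ^ (k + n) • ⊤ : Submodule R N) := by
    simp only [map_sub, hd]
    convert_to x (k + n + 1) - x (k + n) - d - (f yₙ - x (k + n)) ∈ I ^ (k + n) • ⊤
    · abel
    · refine Submodule.sub_mem _ (Submodule.sub_mem _ ?_ ?_) hyₙ
      · rw [← Submodule.Quotient.eq]
        exact AdicCauchySequence.mk_eq_mk (by omega) _
      · exact (Submodule.smul_mono_left (Ideal.pow_le_pow_right (by omega))) hdmem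
  have hincl : I ^ (k + n - k) • (I ^ k • ⊤ ⊓ range f) ≤ I ^ (k + n - k) • (range f) :=
    Submodule.smul_mono le_rfl inf_le_right
  have hyyₙ : y - yₙ ∈ (I ^ n • ⊤ : Submodule R M) := by
    convert_to y - yₙ ∈ (I ^ (k + n - k) • ⊤ : Submodule R M)
    · simp
    · rw [← Submodule.comap_map_eq_of_injective hf (I ^ (k + n - k) • ⊤ : Submodule R M),
        Submodule.map_smul'', Submodule.map_top]
      apply hincl
      rw [← hkn (k + n) (by omega)]
      exact ⟨h, ⟨y - yₙ, rfl⟩⟩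
  ⟨⟨y - yₙ, hyyₙ⟩, by simpa [hd, Nat.succ_eq_add_one, Nat.add_assoc]⟩

open Submodule in
private noncomputable def mapExactAux {f : M →ₗ[R] N} {g : N →ₗ[R] P}
    (hf : Function.Injective f) (hfg : Function.Exact f g) (hg : Function.Surjective g)
    {k : ℕ}
    (hkn : ∀ n ≥ k, (I ^ n • ⊤ : Submodule R N) ⊓ LinearMap.range f
      = I ^ (n - k) • ((I ^ k • ⊤ : Submodule R N) ⊓ LinearMap.range f))
    (x : AdicCauchySequence I N)
    (hker : ∀ (n : ℕ), g (x n) ∈ (I ^ n • ⊤ : Submodule R P)) :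
    (n : ℕ) → { a : M | f a - x (k + n) ∈ (I ^ (k + n) • ⊤ : Submodule R N) }
  | .zero =>
      let d := (h2 0).choose
      let y := (h2 0).choose_spec.choose
      have hdy : f y = x (k + 0) - d := (h2 0).choose_spec.choose_spec.right
      have hdmem := (h2 0).choose_spec.choose_spec.left
      ⟨y, by simpa [hdy]⟩
  | .succ n =>
      let d := (h2 <| n + 1).choose
      let y := (h2 <| n + 1).choose_spec.choose
      have hdy : f y = x (k + (n + 1)) - d := (h2 <| n + 1).choose_spec.choose_spec.right
      have hdmem := (h2 <| n + 1).choose_spec.choose_spec.left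
      let ⟨yₙ, (hyₙ : f yₙ - x (k + n) ∈ (I ^ (k + n) • ⊤ : Submodule R N))⟩ :=
        mapExactAux hf hfg hg hkn x hker n
      let ⟨d, hd⟩ := mapExactAuxDelta hf hkn x hdmem hdy hyₙ
      ⟨yₙ + d, hd⟩
 where
  h1 (n : ℕ) : g (x (k + n)) ∈ Submodule.map g (I ^ (k + n) • ⊤ : Submodule R N) := by
    rw [map_smul'', Submodule.map_top, range_eq_top.mpr hg]
    exact hker (k + n)
  h2 (n : ℕ) : ∃ (d : N) (y : M),
      d ∈ (I ^ (k + n) • ⊤ : Submodule R N) ∧ f y = x (k + n) - d := by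
    obtain ⟨d, hdmem, hd⟩ := h1 n
    obtain ⟨y, hdy⟩ := (hfg (x (k + n) - d)).mp (by simp [hd])
    exact ⟨d, y, hdmem, hdy⟩

/-- Port of `AdicCompletion.map_exact` with explicit Artin-Rees hypothesis. -/
theorem map_exact' {f : M →ₗ[R] N} {g : N →ₗ[R] P}
    (hf : Function.Injective f) (hfg : Function.Exact f g) (hg : Function.Surjective g)
    {k : ℕ}
    (hkn : ∀ n ≥ k, (I ^ n • ⊤ : Submodule R N) ⊓ LinearMap.range f
      = I ^ (n - k) • ((I ^ k • ⊤ : Submodule R N) ⊓ LinearMap.range f)) :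
    Function.Exact (AdicCompletion.map I f) (AdicCompletion.map I g) := by
  refine LinearMap.exact_of_comp_eq_zero_of_ker_le_range ?_ (fun y ↦ ?_)
  · rw [AdicCompletion.map_comp, hfg.linearMap_comp_eq_zero, AdicCompletion.map_zero]
  · apply AdicCompletion.induction_on I N y (fun b ↦ ?_)
    intro hz
    have hb (n : ℕ) : g (b n) ∈ (I ^ n • ⊤ : Submodule R P) := by
      simpa using congrArg (fun x ↦ x.val n) hz
    let a := mapExactAux hf hfg hg hkn b hb
    refine ⟨AdicCompletion.mk I M (AdicCauchySequence.mk I M (fun n ↦ (a n : M)) ?_), ?_⟩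
    · refine fun n ↦ SModEq.symm ?_
      simp [a, mapExactAux, SModEq]
    · ext n
      suffices h : Submodule.Quotient.mk (p := (I ^ n • ⊤ : Submodule R N)) (f (a n)) =
            Submodule.Quotient.mk (p := (I ^ n • ⊤ : Submodule R N)) (b (k + n)) by
        simp [h, AdicCauchySequence.mk_eq_mk (show n ≤ k + n by omega)]
      rw [Submodule.Quotient.eq]
      have hle : (I ^ (k + n) • ⊤ : Submodule R N) ≤ (I ^ n • ⊤ : Submodule R N) :=
        Submodule.smul_mono_left (Ideal.pow_le_pow_right (by omega))
      exact hle (a n).property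

end Exact


section Chase

variable (I)

lemma ofTensorProduct_injective_of_fg_ker {r : ℕ} (f : (Fin r → R) →ₗ[R] M)
    (hf : Function.Surjective f) (hker : (LinearMap.ker f).FG)
    {k : ℕ} (hkn : ∀ n ≥ k, (I ^ n • ⊤ : Submodule R (Fin r → R)) ⊓ (LinearMap.ker f)
      = I ^ (n - k) • ((I ^ k • ⊤ : Submodule R (Fin r → R)) ⊓ (LinearMap.ker f))) :
    Function.Injective (ofTensorProduct I M) := by
  classical
  haveI : Module.Finite R (LinearMap.ker f) := Module.Finite.iff_fg.mpr hker
  have hkn' : ∀ n ≥ k, (I ^ n • ⊤ : Submodule R (Fin r → R)) ⊓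
        LinearMap.range (LinearMap.ker f).subtype
      = I ^ (n - k) • ((I ^ k • ⊤ : Submodule R (Fin r → R)) ⊓
        LinearMap.range (LinearMap.ker f).subtype) := by
    simpa only [Submodule.range_subtype] using hkn
  have exact_row : Function.Exact (AdicCompletion.map I (LinearMap.ker f).subtype)
      (AdicCompletion.map I f) :=
    map_exact' (Submodule.injective_subtype _) (f.exact_subtype_ker_map) hf hkn'
  rw [← LinearMap.ker_eq_bot, LinearMap.ker_eq_bot']
  intro t ht
  have hsurj : Function.Surjective
      (AlgebraTensorModule.map (LinearMap.id (R := AdicCompletion I R)) f :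
        AdicCompletion I R ⊗[R] (Fin r → R) →ₗ[AdicCompletion I R] AdicCompletion I R ⊗[R] M) :=
    LinearMap.lTensor_surjective (AdicCompletion I R) hf
  obtain ⟨s, rfl⟩ := hsurj t
  have h0 : AdicCompletion.map I f (ofTensorProduct I (Fin r → R) s) = 0 := by
    have := LinearMap.congr_fun (ofTensorProduct_naturality I f) s
    simp only [LinearMap.coe_comp, Function.comp_apply] at this
    rw [this, ht]
  obtain ⟨u, hu⟩ := (exact_row _).mp h0
  obtain ⟨v, rfl⟩ := ofTensorProduct_surjective_of_finite I (LinearMap.ker f) u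
  have hnat := LinearMap.congr_fun
    (ofTensorProduct_naturality I (LinearMap.ker f).subtype) v
  simp only [LinearMap.coe_comp, Function.comp_apply] at hnat
  rw [hnat] at hu
  have hs : s = AlgebraTensorModule.map LinearMap.id (LinearMap.ker f).subtype v :=
    (ofTensorProduct_bijective_of_pi_of_fintype I (Fin r)).injective hu.symm
  rw [hs]
  clear hs hu hnat h0 ht
  induction v using TensorProduct.induction_on with
  | zero => simp
  | tmul x y =>
      have : f (y : Fin r → R) = 0 := y.2
      simp [this]
  | add a b ha hb => simp [ha, hb]

end Chase

section Main

variable (I)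

/-- Transport the Artin-Rees property to ideals of `R` via `(Fin 1 → R) ≃ₗ R`. -/
lemma artinRees_ideal (hAR : HasArtinReesProperty R I) (a : Ideal R) (ha : a.FG) :
    ∃ c : ℕ, ∀ n > c, (I ^ n • ⊤ : Submodule R R) ⊓ a
      = I ^ (n - c) • ((I ^ c • ⊤ : Submodule R R) ⊓ a) := by
  let e : (Fin 1 → R) ≃ₗ[R] R := LinearEquiv.funUnique (Fin 1) R R
  have hmap : ∀ p : Submodule R R,
      Submodule.map e.toLinearMap (Submodule.map e.symm.toLinearMap p) = p := by
    intro p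
    rw [← Submodule.map_comp]
    simp
  have hF : (Submodule.map e.symm.toLinearMap (a : Submodule R R)).FG :=
    Submodule.FG.map _ ha
  obtain ⟨c, hc⟩ := hAR 1 _ hF
  refine ⟨c, fun n hn => ?_⟩
  have h := congrArg (Submodule.map e.toLinearMap) (hc n hn)
  have htop : ∀ j : ℕ, Submodule.map e.toLinearMap (I ^ j • ⊤ : Submodule R (Fin 1 → R))
      = (I ^ j • ⊤ : Submodule R R) := by
    intro j
    rw [Submodule.map_smul'', Submodule.map_top]
    congr 1
    exact LinearMap.range_eq_top.mpr e.surjective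
  rw [Submodule.map_inf e.toLinearMap e.injective, htop, hmap, Submodule.map_smul'',
    Submodule.map_inf e.toLinearMap e.injective, htop, hmap] at h
  exact h

/-- The `I`-adic completion of a coherent ring with the Artin-Rees property is flat. -/
lemma flat_aux (hcoh : IsCoherentRing R) (hAR : HasArtinReesProperty R I) :
    Module.Flat R (AdicCompletion I R) := by
  rw [Module.Flat.iff_lTensor_injective]
  intro a ha
  haveI : Module.FinitePresentation R a := hcoh a ha
  obtain ⟨r, f, hf⟩ := Module.Finite.exists_fin' R a
  have hker : (LinearMap.ker f).FG := Module.FinitePresentation.fg_ker f hf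
  obtain ⟨c, hc⟩ := hAR r (LinearMap.ker f) hker
  have hinj_a : Function.Injective (ofTensorProduct I a) :=
    ofTensorProduct_injective_of_fg_ker I f hf hker (ar_shift hc)
  obtain ⟨c', hc'⟩ := artinRees_ideal I hAR a ha
  have hmapinj : Function.Injective (AdicCompletion.map I a.subtype) := by
    apply map_injective' I (Submodule.injective_subtype a)
      (k := c' + 1)
    intro n hn
    rw [Submodule.range_subtype]
    exact ar_shift hc' n hn
  have key : Function.Injective
      (AlgebraTensorModule.map (LinearMap.id (R := AdicCompletion I R)) a.subtype :
        AdicCompletion I R ⊗[R] a →ₗ[AdicCompletion I R] AdicCompletion I R ⊗[R] R) := by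
    intro z w h
    have hz := DFunLike.congr_fun (ofTensorProduct_naturality I a.subtype) z
    have hw := DFunLike.congr_fun (ofTensorProduct_naturality I a.subtype) w
    simp only [LinearMap.coe_comp, Function.comp_apply] at hz hw
    apply hinj_a
    apply hmapinj
    rw [hz, hw, h]
  have heq : ∀ z : AdicCompletion I R ⊗[R] a,
      LinearMap.lTensor (AdicCompletion I R) a.subtype z
        = AlgebraTensorModule.map (LinearMap.id (R := AdicCompletion I R)) a.subtype z := by
    intro z
    induction z using TensorProduct.induction_on with
    | zero => simp
    | tmul p q => simp
    | add u v hu hv => simp only [map_add, hu, hv]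
  intro z w h
  exact key (by rw [← heq, ← heq, h])

lemma map_subtype_mem_ideal_map (a : Ideal R) [Module.Finite R a]
    (y : AdicCompletion I a) :
    AdicCompletion.map I a.subtype y ∈ a.map (algebraMap R (AdicCompletion I R)) := by
  obtain ⟨t, rfl⟩ := ofTensorProduct_surjective_of_finite I a y
  have hnat := DFunLike.congr_fun (ofTensorProduct_naturality I a.subtype) t
  simp only [LinearMap.coe_comp, Function.comp_apply] at hnat
  rw [hnat]
  clear hnat
  induction t using TensorProduct.induction_on with
  | zero => simpa using Submodule.zero_mem _
  | tmul p q =>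
      simp only [AlgebraTensorModule.map_tmul, LinearMap.id_coe, id_eq, ofTensorProduct_tmul]
      exact Submodule.smul_mem _ p (Ideal.mem_map_of_mem _ q.2)
  | add u v hu hv =>
      rw [map_add, map_add]
      exact Submodule.add_mem _ hu hv

lemma closure_eq (hAR : HasArtinReesProperty R I) (a : Ideal R) (ha : a.FG) :
    a.map (algebraMap R (AdicCompletion I R)) =
      ⨅ n : ℕ, (a.map (algebraMap R (AdicCompletion I R)) ⊔ RingHom.ker (evalₐ I n)) := by
  haveI : Module.Finite R a := Module.Finite.iff_fg.mpr ha
  apply le_antisymm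
  · exact le_iInf fun n => le_sup_left
  · intro x hx
    rw [Submodule.mem_iInf] at hx
    have h0 : ∀ n : ℕ, (I ^ n • ⊤ : Ideal R) = I ^ n := fun n => by ext t; simp
    have hb : ∀ n : ℕ, ∃ b ∈ a, x.val n
        = Submodule.Quotient.mk (p := (I ^ n • ⊤ : Submodule R R)) b := by
      intro n
      obtain ⟨y, hy, z, hz, hyz⟩ := Submodule.mem_sup.mp (hx n)
      have hxy : evalₐ I n x = evalₐ I n y := by
        rw [← hyz, map_add, show evalₐ I n z = 0 from hz, add_zero]
      have hcomp : ((evalₐ I n : AdicCompletion I R →ₐ[R] R ⧸ I ^ n) :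
            AdicCompletion I R →+* R ⧸ I ^ n).comp (algebraMap R (AdicCompletion I R))
          = Ideal.Quotient.mk (I ^ n) := by
        ext r
        simp [AlgHom.commutes]
      have hy' : evalₐ I n y ∈ a.map (Ideal.Quotient.mk (I ^ n)) := by
        have h1 : evalₐ I n y ∈ (a.map (algebraMap R (AdicCompletion I R))).map
            ((evalₐ I n : AdicCompletion I R →ₐ[R] R ⧸ I ^ n) :
              AdicCompletion I R →+* R ⧸ I ^ n) :=
          Ideal.mem_map_of_mem _ hy
        rwa [Ideal.map_map, hcomp] at h1
      obtain ⟨b, hb, hbe⟩ := Ideal.mem_image_of_mem_map_of_surjective _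
        Ideal.Quotient.mk_surjective hy'
      refine ⟨b, hb, ?_⟩
      have heq : (Ideal.quotientEquivAlgOfEq R (h0 n)) (x.val n)
          = (Ideal.quotientEquivAlgOfEq R (h0 n))
            (Submodule.Quotient.mk (p := (I ^ n • ⊤ : Submodule R R)) b) := by
        show evalₐ I n x = _
        rw [show (Submodule.Quotient.mk (p := (I ^ n • ⊤ : Submodule R R)) b)
          = Ideal.Quotient.mk (I ^ n • ⊤ : Ideal R) b from rfl]
        rw [Ideal.quotientEquivAlgOfEq_mk, hxy, ← hbe]
      exact (Ideal.quotientEquivAlgOfEq R (h0 n)).injective heq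
    choose b hb1 hb2 using hb
    have hbk : ∀ {n k : ℕ}, n ≤ k →
        (Submodule.Quotient.mk (p := (I ^ n • ⊤ : Submodule R R)) (b k)) = x.val n := by
      intro n k hnk
      have h1 := x.property hnk
      rw [hb2 k] at h1
      rw [← h1]
      rfl
    obtain ⟨c, hc⟩ := artinRees_ideal I hAR a ha
    have hs : ∀ n : ℕ, (⟨b (n + c + 1), hb1 _⟩ : a) ≡ ⟨b (n + 1 + c + 1), hb1 _⟩
        [SMOD (I ^ n • ⊤ : Submodule R a)] := by
      intro n
      rw [SModEq.sub_mem]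
      have hd : b (n + c + 1) - b (n + 1 + c + 1) ∈ (I ^ (n + c + 1) • ⊤ : Submodule R R) ⊓ a := by
        constructor
        · exact (Submodule.Quotient.eq _).mp (by rw [hbk (le_refl _), hbk (by omega)])
        · exact Submodule.sub_mem _ (hb1 _) (hb1 _)
      rw [hc (n + c + 1) (by omega)] at hd
      have hd2 : b (n + c + 1) - b (n + 1 + c + 1) ∈ I ^ n • (a : Submodule R R) := by
        have hle : I ^ ((n + c + 1) - c) • ((I ^ c • ⊤ : Submodule R R) ⊓ a)
            ≤ I ^ n • (a : Submodule R R) :=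
          Submodule.smul_mono (Ideal.pow_le_pow_right (by omega)) inf_le_right
        exact hle hd
      have hma : Submodule.map a.subtype (I ^ n • (⊤ : Submodule R a))
          = I ^ n • (a : Submodule R R) := by
        rw [Submodule.map_smul'', Submodule.map_top, Submodule.range_subtype]
      rw [← hma] at hd2
      obtain ⟨u, hu, hu2⟩ := hd2
      have heq : (⟨b (n + c + 1), hb1 _⟩ - ⟨b (n + 1 + c + 1), hb1 _⟩ : a) = u :=
        Subtype.ext (by simpa using hu2.symm)
      rw [heq]
      exact hu
    set seq := AdicCauchySequence.mk I a (fun n => ⟨b (n + c + 1), hb1 _⟩) hs with hseq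
    have hxx : AdicCompletion.map I a.subtype (AdicCompletion.mk I a seq) = x := by
      apply AdicCompletion.ext
      intro n
      rw [AdicCompletion.map_mk]
      show Submodule.Quotient.mk (p := (I ^ n • ⊤ : Submodule R R)) (b (n + c + 1)) = x.val n
      exact hbk (by omega)
    rw [← hxx]
    exact map_subtype_mem_ideal_map I a _


end Main

end ARFlatProof


/-- Let `A` be a coherent ring with the Artin–Rees property with respect
to an ideal `m`, and `Â` the `m`-adic completion.  Then `A → Â` is flat, and for every
finitely generated ideal `a ⊆ A` the extension `aÂ` coincides with the topological closure
`â = ⋂ₙ (aÂ + ker(Â → A/mⁿ))` of `a` in `Â`; in particular `aÂ` is closed in `Â`. -/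
theorem flat_completion_of_coherent_artinRees
    (A : Type*) [CommRing A] (m : Ideal A)
    (hcoh : IsCoherentRing A) (hAR : HasArtinReesProperty A m) :
    Module.Flat A (AdicCompletion m A) ∧
      ∀ a : Ideal A, a.FG →
        a.map (algebraMap A (AdicCompletion m A)) =
          ⨅ n : ℕ, (a.map (algebraMap A (AdicCompletion m A)) ⊔
            RingHom.ker (AdicCompletion.evalₐ m n)) := by
  refine ⟨ARFlatProof.flat_aux m hcoh hAR, fun a ha => ARFlatProof.closure_eq m hAR a ha⟩
end

section
/- Let S be a Noetherian ring, n an ideal of S, I an arbitrary index set, P = S[x_i : i ∈ I] the polynomial ring, and m = (x_i : i ∈ I) + nP. Then P has the Artin–Rees property with respect to m: for every finitely generated submodule F of a finitely generated free P-module E, there exists c such that mⁿE ∩ F = m^{n−c}(m^cE ∩ F) for all n > c. -/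
set_option linter.unusedSectionVars false
set_option maxHeartbeats 1000000

open MvPolynomial

namespace ARWork

/-- total degree of a monomial exponent -/
def deg {σ : Type*} (d : σ →₀ ℕ) : ℕ := d.sum fun _ n => n

lemma deg_add {σ : Type*} (d₁ d₂ : σ →₀ ℕ) : deg (d₁ + d₂) = deg d₁ + deg d₂ :=
  Finsupp.sum_add_index' (fun _ => rfl) (fun _ _ _ => rfl)

lemma deg_zero {σ : Type*} : deg (0 : σ →₀ ℕ) = 0 := by
  simp [deg]

lemma deg_single {σ : Type*} (a : σ) (n : ℕ) : deg (Finsupp.single a n) = n := by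
  simp [deg, Finsupp.sum_single_index]

lemma deg_pos {σ : Type*} {d : σ →₀ ℕ} (hd : d ≠ 0) : 0 < deg d := by
  obtain ⟨i, hi⟩ : ∃ i, d i ≠ 0 := by
    by_contra h
    push_neg at h
    exact hd (Finsupp.ext fun i => h i)
  have : d i ≤ deg d := by
    refine Finset.single_le_sum (fun j _ => Nat.zero_le _) ?_
    exact Finsupp.mem_support_iff.mpr hi
  omega

lemma exists_split {σ : Type*} (d : σ →₀ ℕ) (k : ℕ) (hk : k ≤ deg d) :
    ∃ d₁ d₂, d = d₁ + d₂ ∧ deg d₁ = k := by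
  induction k with
  | zero => exact ⟨0, d, by simp, deg_zero⟩
  | succ k ih =>
    obtain ⟨d₁, d₂, hd, hdeg⟩ := ih (Nat.le_of_succ_le hk)
    have h2 : d₂ ≠ 0 := by
      intro h
      rw [h] at hd
      rw [add_zero] at hd
      rw [hd, hdeg] at hk
      omega
    obtain ⟨i, hi⟩ : ∃ i, d₂ i ≠ 0 := by
      by_contra h
      push_neg at h
      exact h2 (Finsupp.ext fun i => h i)
    have hle : Finsupp.single i 1 ≤ d₂ := by
      rw [Finsupp.single_le_iff]
      omega
    refine ⟨d₁ + Finsupp.single i 1, d₂ - Finsupp.single i 1, ?_, ?_⟩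
    · rw [hd, add_assoc, add_tsub_cancel_of_le hle]
    · rw [deg_add, hdeg, deg_single]
section Grading

variable {R : Type*} [CommRing R] {σ : Type*} (m₀ : Ideal R)

/-- the maximal-type ideal of the polynomial ring -/
noncomputable def mm (σ : Type*) (m₀ : Ideal R) : Ideal (MvPolynomial σ R) :=
  Ideal.span (Set.range X) ⊔ m₀.map (C : R →+* MvPolynomial σ R)

lemma X_mem_mm (i : σ) : (X i : MvPolynomial σ R) ∈ mm σ m₀ :=
  le_sup_left (α := Ideal (MvPolynomial σ R))
    (Ideal.subset_span ⟨i, rfl⟩)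

lemma C_mem_mm {a : R} (ha : a ∈ m₀) : (C a : MvPolynomial σ R) ∈ mm σ m₀ :=
  le_sup_right (α := Ideal (MvPolynomial σ R)) (Ideal.mem_map_of_mem _ ha)

lemma constantCoeff_mem (p : MvPolynomial σ R) (hp : p ∈ mm σ m₀) :
    coeff 0 p ∈ m₀ := by
  have h : mm σ m₀ ≤ Ideal.comap (constantCoeff : MvPolynomial σ R →+* R) m₀ := by
    refine sup_le ?_ ?_
    · rw [Ideal.span_le]
      rintro _ ⟨i, rfl⟩
      simp [Ideal.mem_comap]
    · rw [Ideal.map_le_iff_le_comap]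
      intro a ha
      simpa [Ideal.mem_comap] using ha
  simpa [Ideal.mem_comap, ← constantCoeff_eq] using h hp

/-- key grading fact on powers of `mm` -/
lemma coeff_mem_of_mem_pow {k : ℕ} {p : MvPolynomial σ R} (hp : p ∈ (mm σ m₀) ^ k)
    (d : σ →₀ ℕ) : coeff d p ∈ m₀ ^ (k - deg d) := by
  classical
  induction k generalizing p d with
  | zero => simp [Ideal.one_eq_top]
  | succ k ih =>
    rw [pow_succ'] at hp
    -- hp : p ∈ mm σ m₀ * (mm σ m₀)^k
    refine Submodule.mul_induction_on hp ?_ ?_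
    · intro a ha b hb
      rw [coeff_mul]
      refine Ideal.sum_mem _ ?_
      rintro ⟨d₁, d₂⟩ hmem
      rw [Finset.HasAntidiagonal.mem_antidiagonal] at hmem
      have hdsum : deg d₁ + deg d₂ = deg d := by rw [← deg_add, hmem]
      by_cases h1 : d₁ = 0
      · subst h1
        have h0 : coeff 0 a ∈ m₀ := constantCoeff_mem m₀ a ha
        have h2 : coeff d₂ b ∈ m₀ ^ (k - deg d₂) := ih hb d₂
        have : coeff (0:σ→₀ℕ) a * coeff d₂ b ∈ m₀ ^ (1 + (k - deg d₂)) := by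
          rw [pow_add, pow_one]
          exact Ideal.mul_mem_mul h0 h2
        refine Ideal.pow_le_pow_right ?_ this
        have : deg (0:σ→₀ℕ) = 0 := deg_zero
        omega
      · have hd1 : 0 < deg d₁ := deg_pos h1
        have h2 : coeff d₂ b ∈ m₀ ^ (k - deg d₂) := ih hb d₂
        have : coeff d₁ a * coeff d₂ b ∈ m₀ ^ (k - deg d₂) :=
          Ideal.mul_mem_left _ _ h2
        refine Ideal.pow_le_pow_right ?_ this
        omega
    · intro x y hx hy
      rw [coeff_add]
      exact Ideal.add_mem _ hx hy

lemma monomial_one_mem_pow (d : σ →₀ ℕ) :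
    (monomial d (1 : R)) ∈ (mm σ m₀) ^ (deg d) := by
  classical
  induction d using Finsupp.induction with
  | zero => simp [deg_zero, Ideal.one_eq_top]
  | single_add a n f ha hn ih =>
    have : (monomial (Finsupp.single a n + f) (1:R)) =
        (X a ^ n) * monomial f 1 := by
      rw [X_pow_eq_monomial, monomial_mul, one_mul]
    rw [this, deg_add, deg_single, pow_add]
    exact Ideal.mul_mem_mul (Ideal.pow_mem_pow (X_mem_mm m₀ a) n) ih

end Grading
section Vectors
variable {R : Type*} [CommRing R] {σ : Type*} {r : ℕ} [DecidableEq σ]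

/-- coordinatewise inclusion of constants -/
noncomputable def ψ (σ : Type*) (v : Fin r → R) : Fin r → MvPolynomial σ R :=
  fun i => C (v i)

/-- coordinatewise coefficient extraction -/
def cv (d : σ →₀ ℕ) (x : Fin r → MvPolynomial σ R) : Fin r → R := fun i => coeff d (x i)

lemma psi_add (v w : Fin r → R) : ψ σ (v + w) = ψ σ v + ψ σ w := by
  funext i; simp [ψ]

lemma psi_smul (a : R) (v : Fin r → R) :
    ψ σ (a • v) = (C a : MvPolynomial σ R) • ψ σ v := by
  funext i; simp [ψ, smul_eq_mul]


lemma psi_zero : ψ (R := R) σ (0 : Fin r → R) = 0 := by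
  funext i; simp [ψ]

lemma cv_add (d : σ →₀ ℕ) (x y : Fin r → MvPolynomial σ R) :
    cv d (x + y) = cv d x + cv d y := by
  funext i; simp [cv]

lemma cv_smul (d : σ →₀ ℕ) (p : MvPolynomial σ R) (x : Fin r → MvPolynomial σ R) :
    cv d (p • x) = ∑ ab ∈ Finset.HasAntidiagonal.antidiagonal d, coeff ab.1 p • cv ab.2 x := by
  funext i
  simp [cv, smul_eq_mul, coeff_mul, Finset.sum_apply]

lemma cv_zero (d : σ →₀ ℕ) : cv d (0 : Fin r → MvPolynomial σ R) = 0 := by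
  funext i; simp [cv]

lemma cv_psi (d : σ →₀ ℕ) (v : Fin r → R) :
    cv d (ψ σ v) = if d = 0 then v else 0 := by
  funext i
  by_cases h : d = 0 <;> simp [cv, ψ, coeff_C, h, eq_comm]

lemma decomp (x : Fin r → MvPolynomial σ R) :
    x = ∑ d ∈ Finset.univ.biUnion (fun i => (x i).support),
      (monomial d 1 : MvPolynomial σ R) • ψ σ (cv d x) := by
  funext i
  rw [Finset.sum_apply]
  have h1 : ∀ d : σ →₀ ℕ, ((monomial d 1 : MvPolynomial σ R) • ψ σ (cv d x)) i
      = monomial d (coeff d (x i)) := by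
    intro d
    show (monomial d 1 : MvPolynomial σ R) * C (coeff d (x i)) = _
    rw [mul_comm, C_mul_monomial, mul_one]
  simp only [h1]
  refine (as_sum (x i)).trans (Finset.sum_subset ?_ ?_)
  · exact Finset.subset_biUnion_of_mem (fun j => (x j).support) (Finset.mem_univ i)
  · intro d _ hd
    rw [notMem_support_iff] at hd
    rw [hd, monomial_zero]

variable (m₀ : Ideal R)

lemma psi_mem_smul {j : ℕ} {v : Fin r → R}
    (hv : v ∈ (m₀ ^ j • ⊤ : Submodule R (Fin r → R))) :
    ψ σ v ∈ ((mm σ m₀) ^ j • ⊤ :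
      Submodule (MvPolynomial σ R) (Fin r → MvPolynomial σ R)) := by
  refine Submodule.smul_induction_on hv ?_ ?_
  · intro a ha w _
    rw [psi_smul]
    refine Submodule.smul_mem_smul ?_ Submodule.mem_top
    have h1 : (C a : MvPolynomial σ R) ∈ (m₀ ^ j).map (C : R →+* MvPolynomial σ R) :=
      Ideal.mem_map_of_mem _ ha
    rw [Ideal.map_pow] at h1
    exact Ideal.pow_right_mono le_sup_right j h1
  · intro x y hx hy
    rw [psi_add]
    exact Submodule.add_mem _ hx hy

lemma smul_mem_pow_smul {a b : ℕ} {p : MvPolynomial σ R} (hp : p ∈ (mm σ m₀) ^ a)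
    {y : Fin r → MvPolynomial σ R}
    (hy : y ∈ ((mm σ m₀) ^ b • ⊤ : Submodule (MvPolynomial σ R) _)) :
    p • y ∈ ((mm σ m₀) ^ (a + b) • ⊤ : Submodule (MvPolynomial σ R) _) := by
  rw [pow_add, ← smul_eq_mul, Submodule.smul_assoc]
  exact Submodule.smul_mem_smul hp hy

lemma pow_smul_mono {a b : ℕ} (h : b ≤ a) :
    ((mm σ m₀) ^ a • ⊤ : Submodule (MvPolynomial σ R) (Fin r → MvPolynomial σ R))
      ≤ (mm σ m₀) ^ b • ⊤ :=
  Submodule.smul_mono_left (Ideal.pow_le_pow_right h)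

lemma mem_pow_smul_top_iff {k : ℕ} {x : Fin r → MvPolynomial σ R} :
    x ∈ ((mm σ m₀) ^ k • ⊤ :
        Submodule (MvPolynomial σ R) (Fin r → MvPolynomial σ R))
      ↔ ∀ d, cv d x ∈ (m₀ ^ (k - deg d) • ⊤ : Submodule R (Fin r → R)) := by
  constructor
  · intro hx d
    refine Submodule.smul_induction_on hx ?_ ?_
    · intro p hp e _
      rw [cv_smul]
      refine Submodule.sum_mem _ ?_
      rintro ⟨d₁, d₂⟩ hmem
      rw [Finset.HasAntidiagonal.mem_antidiagonal] at hmem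
      have h1 : coeff d₁ p ∈ m₀ ^ (k - deg d₁) := coeff_mem_of_mem_pow m₀ hp d₁
      have h2 : (coeff d₁ p) • cv d₂ e ∈ (m₀ ^ (k - deg d₁) • ⊤ : Submodule R (Fin r → R)) :=
        Submodule.smul_mem_smul h1 Submodule.mem_top
      refine Submodule.smul_mono_left (Ideal.pow_le_pow_right ?_) h2
      have h3 := deg_add d₁ d₂
      rw [hmem] at h3
      omega
    · intro x y hx hy
      rw [cv_add]
      exact Submodule.add_mem _ hx hy
  · intro h
    rw [show x = _ from decomp x]
    refine Submodule.sum_mem _ ?_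
    intro d _
    have h1 : ψ σ (cv d x) ∈ ((mm σ m₀) ^ (k - deg d) • ⊤ :
        Submodule (MvPolynomial σ R) (Fin r → MvPolynomial σ R)) :=
      psi_mem_smul m₀ (h d)
    have h2 := smul_mem_pow_smul m₀ (monomial_one_mem_pow m₀ d) h1
    exact pow_smul_mono m₀ (by omega) h2

variable (F₀ : Submodule R (Fin r → R))

/-- the extension of `F₀` to the polynomial ring -/
noncomputable def FF : Submodule (MvPolynomial σ R) (Fin r → MvPolynomial σ R) :=
  Submodule.span (MvPolynomial σ R) (ψ σ '' (F₀ : Set (Fin r → R)))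

lemma psi_mem_FF {v : Fin r → R} (hv : v ∈ F₀) : ψ σ v ∈ FF (σ := σ) F₀ :=
  Submodule.subset_span ⟨v, hv, rfl⟩

lemma mem_FF_iff {x : Fin r → MvPolynomial σ R} :
    x ∈ FF (σ := σ) F₀ ↔ ∀ d, cv d x ∈ F₀ := by
  constructor
  · intro hx
    induction hx using Submodule.span_induction with
    | mem y hy =>
      obtain ⟨v, hv, rfl⟩ := hy
      intro d
      rw [cv_psi]
      split_ifs
      · exact hv
      · exact Submodule.zero_mem _
    | zero => intro d; rw [cv_zero]; exact Submodule.zero_mem _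
    | add y z hy hz hy' hz' =>
      intro d; rw [cv_add]; exact Submodule.add_mem _ (hy' d) (hz' d)
    | smul p y hy hy' =>
      intro d
      rw [cv_smul]
      refine Submodule.sum_mem _ ?_
      rintro ⟨d₁, d₂⟩ _
      exact Submodule.smul_mem _ _ (hy' d₂)
  · intro h
    rw [show x = _ from decomp x]
    refine Submodule.sum_mem _ ?_
    intro d _
    exact Submodule.smul_mem _ _ (psi_mem_FF F₀ (h d))

end Vectors
/-- the trivial inclusion in the Artin–Rees equality -/
lemma easy_dir {A M : Type*} [CommRing A] [AddCommGroup M] [Module A M]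
    (a : Ideal A) (F : Submodule A M) {n c : ℕ} (h : c ≤ n) :
    a ^ (n - c) • ((a ^ c • ⊤ : Submodule A M) ⊓ F) ≤ (a ^ n • ⊤ : Submodule A M) ⊓ F := by
  refine le_inf ?_ ?_
  · refine le_trans (smul_mono_right _ inf_le_left) ?_
    rw [← Submodule.smul_assoc, smul_eq_mul, ← pow_add]
    have : n - c + c = n := by omega
    rw [this]
  · exact le_trans (smul_mono_right _ inf_le_right) Submodule.smul_le_right

/-- Main transfer lemma: the Artin–Rees equality with constant `c` passes from
`(R, m₀, F₀)` to the polynomial extension. -/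
theorem lemmaM {R : Type*} [CommRing R] {σ : Type*} {r : ℕ} [DecidableEq σ]
    (m₀ : Ideal R) (F₀ : Submodule R (Fin r → R)) (c : ℕ)
    (hAR : ∀ n, n > c → (m₀ ^ n • ⊤ ⊓ F₀ : Submodule R (Fin r → R))
      = m₀ ^ (n - c) • ((m₀ ^ c • ⊤ : Submodule R (Fin r → R)) ⊓ F₀)) :
    ∀ n, n > c →
      ((mm σ m₀) ^ n • ⊤ ⊓ FF (σ := σ) F₀ :
          Submodule (MvPolynomial σ R) (Fin r → MvPolynomial σ R))
        = (mm σ m₀) ^ (n - c) •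
            (((mm σ m₀) ^ c • ⊤ : Submodule (MvPolynomial σ R) (Fin r → MvPolynomial σ R))
              ⊓ FF (σ := σ) F₀) := by
  intro n hn
  refine le_antisymm ?_ (easy_dir _ _ (by omega))
  intro x hx
  obtain ⟨hx1, hx2⟩ := Submodule.mem_inf.mp hx
  rw [show x = _ from decomp x]
  refine Submodule.sum_mem _ ?_
  intro d _
  have hv1 : cv d x ∈ (m₀ ^ (n - deg d) • ⊤ : Submodule R (Fin r → R)) :=
    (mem_pow_smul_top_iff m₀).mp hx1 d
  have hv2 : cv d x ∈ F₀ := (mem_FF_iff F₀).mp hx2 d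
  by_cases hcase : deg d < n - c
  · have hgt : n - deg d > c := by omega
    have heq := hAR (n - deg d) hgt
    have hv : cv d x ∈ m₀ ^ (n - deg d - c) •
        ((m₀ ^ c • ⊤ : Submodule R (Fin r → R)) ⊓ F₀) := by
      rw [← heq]
      exact Submodule.mem_inf.mpr ⟨hv1, hv2⟩
    refine Submodule.smul_induction_on hv ?_ ?_
    · intro a ha w hw
      obtain ⟨hw1, hw2⟩ := Submodule.mem_inf.mp hw
      rw [psi_smul, smul_smul]
      refine Submodule.smul_mem_smul ?_ ?_
      · have h1 : (monomial d 1 : MvPolynomial σ R) * C a ∈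
            (mm σ m₀) ^ (deg d) * (mm σ m₀) ^ (n - deg d - c) := by
          refine Ideal.mul_mem_mul (monomial_one_mem_pow m₀ d) ?_
          have := Ideal.mem_map_of_mem (C : R →+* MvPolynomial σ R) ha
          rw [Ideal.map_pow] at this
          exact Ideal.pow_right_mono le_sup_right _ this
        rw [← pow_add] at h1
        exact Ideal.pow_le_pow_right (by omega) h1
      · exact Submodule.mem_inf.mpr ⟨psi_mem_smul m₀ hw1, psi_mem_FF F₀ hw2⟩
    · intro y z hy hz
      rw [psi_add, smul_add]
      exact Submodule.add_mem _ hy hz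
  · -- deg d ≥ n - c
    obtain ⟨d₁, d₂, hd, hdeg₁⟩ := exists_split d (n - c) (by omega)
    have hdd : deg d = (n - c) + deg d₂ := by rw [hd, deg_add, hdeg₁]
    have hmon : (monomial d 1 : MvPolynomial σ R)
        = monomial d₁ 1 * monomial d₂ 1 := by
      rw [monomial_mul, one_mul, ← hd]
    rw [hmon, mul_smul]
    refine Submodule.smul_mem_smul ?_ ?_
    · rw [← hdeg₁]; exact monomial_one_mem_pow m₀ d₁
    · refine Submodule.mem_inf.mpr ⟨?_, ?_⟩
      · have h1 := smul_mem_pow_smul m₀ (monomial_one_mem_pow m₀ d₂) (psi_mem_smul m₀ hv1)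
        exact pow_smul_mono m₀ (by omega) h1
      · exact Submodule.smul_mem _ _ (psi_mem_FF F₀ hv2)
section Transport
variable {A B : Type*} [CommRing A] [CommRing B] {r : ℕ}

/-- coordinatewise application of a ring equivalence -/
def piE (e : A ≃+* B) (x : Fin r → A) : Fin r → B := fun i => e (x i)

lemma piE_add (e : A ≃+* B) (x y : Fin r → A) : piE e (x + y) = piE e x + piE e y := by
  funext i; simp [piE]

lemma piE_zero (e : A ≃+* B) : piE e (0 : Fin r → A) = 0 := by
  funext i; simp [piE]

lemma piE_smul (e : A ≃+* B) (a : A) (x : Fin r → A) :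
    piE e (a • x) = e a • piE e x := by
  funext i; simp [piE, smul_eq_mul]

lemma piE_symm_piE (e : A ≃+* B) (x : Fin r → A) : piE e.symm (piE e x) = x := by
  funext i; simp [piE]

lemma piE_piE_symm (e : A ≃+* B) (y : Fin r → B) : piE e (piE e.symm y) = y := by
  funext i; simp [piE]

lemma map_map_symm (e : A ≃+* B) (a : Ideal A) :
    (a.map (e : A →+* B)).map (e.symm : B →+* A) = a := by
  rw [Ideal.map_map]
  have h : (e.symm : B →+* A).comp (e : A →+* B) = RingHom.id A := by
    ext x; simp
  rw [h, Ideal.map_id]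

lemma transport_smul_fwd (e : A ≃+* B) (a : Ideal A)
    {N : Submodule A (Fin r → A)} {N' : Submodule B (Fin r → B)}
    (hN : ∀ x ∈ N, piE e x ∈ N') :
    ∀ x ∈ (a • N : Submodule A (Fin r → A)),
      piE e x ∈ (a.map (e : A →+* B) • N' : Submodule B (Fin r → B)) := by
  intro x hx
  refine Submodule.smul_induction_on hx ?_ ?_
  · intro c hc y hy
    rw [piE_smul]
    exact Submodule.smul_mem_smul (Ideal.mem_map_of_mem _ hc) (hN y hy)
  · intro y z hy hz
    rw [piE_add]
    exact Submodule.add_mem _ hy hz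

lemma transport_smul_iff (e : A ≃+* B) (a : Ideal A)
    {N : Submodule A (Fin r → A)} {N' : Submodule B (Fin r → B)}
    (hN : ∀ x, piE e x ∈ N' ↔ x ∈ N) :
    ∀ x, piE e x ∈ (a.map (e : A →+* B) • N' : Submodule B (Fin r → B))
      ↔ x ∈ (a • N : Submodule A (Fin r → A)) := by
  intro x
  constructor
  · intro hx
    have hN' : ∀ y ∈ N', piE e.symm y ∈ N := by
      intro y hy
      have h1 := hN (piE e.symm y)
      rw [piE_piE_symm] at h1
      exact h1.mp hy
    have h2 := transport_smul_fwd e.symm (a.map (e : A →+* B)) hN' (piE e x) hx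
    rw [piE_symm_piE, map_map_symm] at h2
    exact h2
  · intro hx
    exact transport_smul_fwd e a (fun y hy => (hN y).mpr hy) x hx

lemma transport_pow_smul_iff (e : A ≃+* B) (a : Ideal A) (b : Ideal B)
    (hab : a.map (e : A →+* B) = b)
    {N : Submodule A (Fin r → A)} {N' : Submodule B (Fin r → B)}
    (hN : ∀ x, piE e x ∈ N' ↔ x ∈ N) (k : ℕ) :
    ∀ x, piE e x ∈ (b ^ k • N' : Submodule B (Fin r → B))
      ↔ x ∈ (a ^ k • N : Submodule A (Fin r → A)) := by
  subst hab
  rw [← Ideal.map_pow]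
  exact transport_smul_iff e (a ^ k) hN

end Transport

end ARWork

open ARWork

/-- Let `S` be a Noetherian ring, `n` an ideal of `S`, `I` an arbitrary
index set, `P = S[xᵢ : i ∈ I]`, and `m = (xᵢ : i ∈ I) + nP`. Then `P` has the Artin–Rees
property with respect to `m`. -/
theorem mvPolynomial_hasArtinReesProperty
    (S : Type*) [CommRing S] [IsNoetherianRing S] (n : Ideal S) (I : Type*) :
    HasArtinReesProperty (MvPolynomial I S)
      (Ideal.span (Set.range MvPolynomial.X) ⊔
        n.map (MvPolynomial.C : S →+* MvPolynomial I S)) := by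
  classical
  intro r F hFG
  obtain ⟨T, hT⟩ := hFG
  set J : Finset I := T.sup (fun g => Finset.univ.sup (fun i => (g i).vars)) with hJ
  let Jt := {i : I // i ∈ J}
  let σt := {i : I // ¬ i ∈ J}
  let R := MvPolynomial Jt S
  let B := MvPolynomial σt R
  let eqv : I ≃ σt ⊕ Jt := ((Equiv.sumCompl (· ∈ J)).symm.trans (Equiv.sumComm _ _))
  let e : MvPolynomial I S ≃+* B :=
    ((renameEquiv S eqv).trans (sumAlgEquiv S σt Jt)).toRingEquiv
  have he : ∀ p, e p = (sumAlgEquiv S σt Jt) (rename eqv p) := fun p => rfl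
  have hX : ∀ i : I, e (X i) = if h : i ∈ J then (C (X ⟨i, h⟩) : B) else X ⟨i, h⟩ := by
    intro i
    rw [he, rename_X]
    by_cases h : i ∈ J
    · have h1 : eqv i = Sum.inr ⟨i, h⟩ := by
        simp [eqv, Equiv.sumCompl_symm_apply_of_pos h]
      rw [h1, dif_pos h]
      rw [sumAlgEquiv_X_inr]
    · have h1 : eqv i = Sum.inl ⟨i, h⟩ := by
        simp [eqv, Equiv.sumCompl_symm_apply_of_neg h]
      rw [h1, dif_neg h]
      rw [sumAlgEquiv_X_inl]
  have hC : ∀ s : S, e (C s) = (C (C s) : B) := by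
    intro s
    rw [he, rename_C]
    rw [sumAlgEquiv_C_inl]
  -- transport of the ideal
  have hMap : (mm I n).map (e : MvPolynomial I S →+* B) = mm σt (mm Jt n) := by
    refine le_antisymm ?_ ?_
    · rw [mm, Ideal.map_sup]
      refine sup_le ?_ ?_
      · rw [Ideal.map_span, Ideal.span_le]
        intro q hq
        obtain ⟨p', ⟨i, rfl⟩, rfl⟩ := hq
        show (e (X i) : B) ∈ mm σt (mm Jt n)
        rw [hX i]
        split_ifs with h
        · exact C_mem_mm _ (X_mem_mm (σ := Jt) n ⟨i, h⟩)
        · exact X_mem_mm (σ := σt) _ ⟨i, h⟩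
      · rw [Ideal.map_map]
        have hcomp : ((e : MvPolynomial I S →+* B)).comp (C : S →+* MvPolynomial I S)
            = (C : R →+* B).comp (C : S →+* R) := by
          exact RingHom.ext hC
        rw [hcomp, ← Ideal.map_map]
        exact le_trans (Ideal.map_mono le_sup_right) le_sup_right
    · rw [mm]
      refine sup_le ?_ ?_
      · rw [Ideal.span_le]
        rintro q ⟨i0, rfl⟩
        have h1 : (X i0 : B) = e (X i0.1) := by rw [hX, dif_neg i0.2]
        rw [h1]
        exact Ideal.mem_map_of_mem _ (X_mem_mm n i0.1)
      · rw [Ideal.map_le_iff_le_comap, mm]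
        refine sup_le ?_ ?_
        · rw [Ideal.span_le]
          rintro q ⟨j0, rfl⟩
          show (C (X j0) : B) ∈ (mm I n).map (e : MvPolynomial I S →+* B)
          have h1 : (C (X j0) : B) = e (X j0.1) := by rw [hX, dif_pos j0.2]
          rw [h1]
          exact Ideal.mem_map_of_mem _ (X_mem_mm n j0.1)
        · rw [Ideal.map_le_iff_le_comap]
          intro s hs
          show (C (C s) : B) ∈ (mm I n).map (e : MvPolynomial I S →+* B)
          rw [← hC s]
          exact Ideal.mem_map_of_mem _ (C_mem_mm n hs)
  -- polynomials supported on J are mapped into constants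
  have hrange : ∀ p : MvPolynomial I S, (↑p.vars : Set I) ⊆ ↑J →
      ∃ q : R, e p = (C q : B) := by
    intro p hp
    have hmem : p ∈ Algebra.adjoin S (X '' (↑J : Set I)) :=
      mem_supported.mpr hp
    clear hp
    induction hmem using Algebra.adjoin_induction with
    | mem x hx =>
      obtain ⟨i, hi, rfl⟩ := hx
      exact ⟨X ⟨i, Finset.mem_coe.mp hi⟩, by rw [hX, dif_pos (Finset.mem_coe.mp hi)]⟩
    | algebraMap s =>
      exact ⟨C s, by rw [show (algebraMap S (MvPolynomial I S)) s = C s from rfl, hC]⟩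
    | add x y hx hy ihx ihy =>
      obtain ⟨qx, hqx⟩ := ihx
      obtain ⟨qy, hqy⟩ := ihy
      exact ⟨qx + qy, by rw [map_add, hqx, hqy, map_add]⟩
    | mul x y hx hy ihx ihy =>
      obtain ⟨qx, hqx⟩ := ihx
      obtain ⟨qy, hqy⟩ := ihy
      exact ⟨qx * qy, by rw [map_mul, hqx, hqy, map_mul]⟩
  have hvars : ∀ g ∈ T, ∀ i : Fin r, ((g i).vars : Set I) ⊆ ↑J := by
    intro g hg i
    have h1 : Finset.univ.sup (fun i => (g i).vars) ≤ J := Finset.le_sup (f := fun g =>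
      Finset.univ.sup (fun i => (g i).vars)) hg
    have h2 : (g i).vars ≤ Finset.univ.sup (fun i => (g i).vars) :=
      Finset.le_sup (f := fun i => (g i).vars) (Finset.mem_univ i)
    exact Finset.coe_subset.mpr (le_trans h2 h1)
  have hGen : ∀ g ∈ T, ∃ w : Fin r → R, piE e g = ψ σt w := by
    intro g hg
    have h1 : ∀ i, ∃ q : R, e (g i) = C q := fun i => hrange (g i) (hvars g hg i)
    choose w hw using h1
    exact ⟨w, funext hw⟩
  -- the base submodule
  let V : Set (Fin r → R) := {v | ψ σt v ∈ piE e '' (↑T : Set (Fin r → MvPolynomial I S))}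
  have hVfin : V.Finite := by
    have hinj : Function.Injective (ψ (R := R) (r := r) σt) := by
      intro v w h
      funext i
      exact C_injective σt R (congrFun h i)
    exact Set.Finite.preimage hinj.injOn ((T.finite_toSet).image _)
  let F₀ : Submodule R (Fin r → R) := Submodule.span R V
  -- transport of the submodule
  have hTgen : ∀ g ∈ T, piE e g ∈ ψ σt '' V := by
    intro g hg
    obtain ⟨w, hw⟩ := hGen g hg
    exact ⟨w, by rw [Set.mem_setOf_eq, ← hw]; exact ⟨g, hg, rfl⟩, hw.symm⟩
  have hFwd : ∀ x ∈ F, piE e x ∈ FF (σ := σt) F₀ := by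
    intro x hx
    rw [← hT] at hx
    induction hx using Submodule.span_induction with
    | mem g hg =>
      obtain ⟨w, hwV, hw⟩ := hTgen g hg
      rw [← hw]
      exact psi_mem_FF F₀ (Submodule.subset_span hwV)
    | zero => rw [piE_zero]; exact Submodule.zero_mem _
    | add x y hx hy ihx ihy => rw [piE_add]; exact Submodule.add_mem _ ihx ihy
    | smul p x hx ih => rw [piE_smul]; exact Submodule.smul_mem _ _ ih
  have hBwd : ∀ y ∈ FF (σ := σt) F₀, piE e.symm y ∈ F := by
    intro y hy
    induction hy using Submodule.span_induction with
    | mem z hz =>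
      obtain ⟨v, hv, rfl⟩ := hz
      induction hv using Submodule.span_induction with
      | mem v hvV =>
        obtain ⟨g, hgT, hg⟩ := hvV
        rw [← hg, piE_symm_piE, ← hT]
        exact Submodule.subset_span hgT
      | zero => rw [psi_zero, piE_zero]; exact Submodule.zero_mem _
      | add v w hv hw ihv ihw =>
        rw [psi_add, piE_add]
        exact Submodule.add_mem _ ihv ihw
      | smul a v hv ihv =>
        rw [psi_smul, piE_smul]
        exact Submodule.smul_mem _ _ ihv
    | zero => rw [piE_zero]; exact Submodule.zero_mem _
    | add y z hy hz ihy ihz => rw [piE_add]; exact Submodule.add_mem _ ihy ihz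
    | smul q y hy ih => rw [piE_smul]; exact Submodule.smul_mem _ _ ih
  have hF' : ∀ x, piE e x ∈ FF (σ := σt) F₀ ↔ x ∈ F := by
    intro x
    constructor
    · intro h
      have h1 := hBwd _ h
      rwa [piE_symm_piE] at h1
    · intro h
      exact hFwd x h
  -- Artin–Rees over the Noetherian base
  haveI : Fintype Jt := FinsetCoe.fintype J
  obtain ⟨c, hc⟩ := Ideal.exists_pow_inf_eq_pow_smul (mm Jt n) F₀
  refine ⟨c, ?_⟩
  intro k hk
  have hB := lemmaM (σ := σt) (mm Jt n) F₀ c (fun j hj => hc j (le_of_lt hj)) k hk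
  have htop : ∀ x : Fin r → MvPolynomial I S,
      piE e x ∈ (⊤ : Submodule B (Fin r → B)) ↔
        x ∈ (⊤ : Submodule (MvPolynomial I S) (Fin r → MvPolynomial I S)) := by
    simp
  have h1 : ∀ (j : ℕ) (x : Fin r → MvPolynomial I S),
      piE e x ∈ ((mm σt (mm Jt n)) ^ j • ⊤ ⊓ FF (σ := σt) F₀ : Submodule B (Fin r → B))
        ↔ x ∈ ((mm I n) ^ j • ⊤ ⊓ F : Submodule (MvPolynomial I S) _) := by
    intro j x
    rw [Submodule.mem_inf, Submodule.mem_inf,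
      transport_pow_smul_iff e (mm I n) _ hMap htop j x, hF' x]
  have h2 : ∀ x : Fin r → MvPolynomial I S,
      piE e x ∈ ((mm σt (mm Jt n)) ^ (k - c) •
          (((mm σt (mm Jt n)) ^ c • ⊤ : Submodule B (Fin r → B)) ⊓ FF (σ := σt) F₀))
        ↔ x ∈ ((mm I n) ^ (k - c) •
          (((mm I n) ^ c • ⊤ : Submodule (MvPolynomial I S) _) ⊓ F)) :=
    transport_pow_smul_iff e (mm I n) _ hMap (h1 c) (k - c)
  show ((mm I n) ^ k • ⊤ ⊓ F : Submodule (MvPolynomial I S) _)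
      = (mm I n) ^ (k - c) • (((mm I n) ^ c • ⊤ : Submodule (MvPolynomial I S) _) ⊓ F)
  ext x
  rw [← h1 k x, ← h2 x, hB]
end

section
/- Let P = k[x_i : i ∈ I] be a polynomial ring over a field in arbitrarily many variables. Every prime ideal of P of finite height is finitely generated. -/
open MvPolynomial

namespace Stmt17

variable {k : Type} [Field k] {I : Type}

/-- Extension of prime ideal along `C` into `MvPolynomial` is prime. -/
theorem isPrime_map_C_mv {R : Type*} [CommRing R] (σ : Type*) {q : Ideal R} (hq : q.IsPrime) :
    (q.map (MvPolynomial.C : R →+* MvPolynomial σ R)).IsPrime := by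
  rw [← Ideal.Quotient.isDomain_iff_prime]
  exact MulEquiv.isDomain (MvPolynomial σ (R ⧸ q))
    (MvPolynomial.quotientEquivQuotientMvPolynomial (σ := σ) q).symm.toRingEquiv.toMulEquiv

noncomputable def incl (S : Finset I) : MvPolynomial S k →+* MvPolynomial I k :=
  (MvPolynomial.rename (Subtype.val : S → I)).toRingHom

noncomputable def res (p : Ideal (MvPolynomial I k)) (S : Finset I) : Ideal (MvPolynomial I k) :=
  (p.comap (incl S)).map (incl S)

theorem res_le (p : Ideal (MvPolynomial I k)) (S : Finset I) : res p S ≤ p :=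
  Ideal.map_comap_le

theorem incl_rename {S T : Finset I} (h : S ⊆ T) (a : MvPolynomial S k) :
    incl T (rename (fun s : S => (⟨s.1, h s.2⟩ : T)) a) = incl S a := by
  simp only [incl, AlgHom.toRingHom_eq_coe, RingHom.coe_coe, rename_rename]
  rfl

theorem res_mono (p : Ideal (MvPolynomial I k)) {S T : Finset I} (h : S ⊆ T) :
    res p S ≤ res p T := by
  rw [res, Ideal.map_le_iff_le_comap]
  intro a ha
  rw [Ideal.mem_comap] at ha ⊢
  rw [← incl_rename h a]
  have : rename (fun s : S => (⟨s.1, h s.2⟩ : T)) a ∈ p.comap (incl T) := by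
    rw [Ideal.mem_comap, incl_rename h]; exact ha
  exact Ideal.mem_map_of_mem _ this

theorem res_fg (p : Ideal (MvPolynomial I k)) (S : Finset I) : (res p S).FG :=
  Ideal.FG.map (IsNoetherian.noetherian _) _

theorem isPrime_map_incl (S : Finset I) {q : Ideal (MvPolynomial S k)} (hq : q.IsPrime) :
    (q.map (incl (k := k) S)).IsPrime := by
  classical
  let e : {x : I // ¬ x ∈ S} ⊕ {x : I // x ∈ S} ≃ I :=
    (Equiv.sumComm _ _).trans (Equiv.sumCompl (· ∈ S))
  let ψ : MvPolynomial I k ≃+* MvPolynomial {x : I // ¬ x ∈ S} (MvPolynomial S k) :=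
    ((renameEquiv k e).symm.trans (sumAlgEquiv k _ _)).toRingEquiv
  have key : ψ.toRingHom.comp (incl S) =
      (MvPolynomial.C : MvPolynomial S k →+* _) := by
    apply MvPolynomial.ringHom_ext
    · intro r
      simp [ψ, incl, e]
    · intro s
      simp [ψ, incl, e, Equiv.sumCompl_symm_apply_of_pos (p := (· ∈ S)) s.2]
  have h1 : (q.map (incl S)).map ψ.toRingHom = q.map MvPolynomial.C := by
    rw [Ideal.map_map, key]
  have h2 : q.map (incl S) = Ideal.comap ψ.toRingHom (q.map MvPolynomial.C) := by
    rw [← h1]; exact (Ideal.comap_map_of_bijective _ ψ.bijective).symm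
  rw [h2]
  have := isPrime_map_C_mv {x : I // ¬ x ∈ S} hq
  exact this.comap _


@[simp] theorem incl_apply (S : Finset I) (a : MvPolynomial S k) :
    incl S a = rename Subtype.val a := rfl

theorem res_isPrime (p : Ideal (MvPolynomial I k)) (hp : p.IsPrime) (S : Finset I) :
    (res p S).IsPrime := by
  haveI := hp
  exact isPrime_map_incl S (Ideal.IsPrime.comap _)

theorem exists_bigger (p : Ideal (MvPolynomial I k)) (hfg : ¬ p.FG) (S : Finset I) :
    ∃ T : Finset I, res p S < res p T := by
  classical
  have hne : res p S ≠ p := fun h => hfg (h ▸ res_fg p S)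
  obtain ⟨f, hfp, hfn⟩ : ∃ f, f ∈ p ∧ f ∉ res p S := by
    by_contra h; push_neg at h
    exact hne (le_antisymm (res_le p S) h)
  obtain ⟨T, g, rfl⟩ := exists_finset_rename f
  have hsub : T ⊆ S ∪ T := Finset.subset_union_right
  have hmem : incl (S ∪ T) (rename (fun s : T => (⟨s.1, hsub s.2⟩ : (S ∪ T : Finset I))) g)
      = rename Subtype.val g := by
    rw [incl_rename hsub, incl_apply]
  have hco : rename (fun s : T => (⟨s.1, hsub s.2⟩ : (S ∪ T : Finset I))) g
      ∈ p.comap (incl (S ∪ T)) := by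
    rw [Ideal.mem_comap, hmem]; exact hfp
  have hf2 : rename Subtype.val g ∈ res p (S ∪ T) := by
    rw [← hmem]; exact Ideal.mem_map_of_mem _ hco
  exact ⟨S ∪ T, lt_of_le_of_ne (res_mono p Finset.subset_union_left)
    (fun hEq => hfn (hEq ▸ hf2))⟩

end Stmt17

/-- The height of an ideal: the infimum of the heights of the prime ideals containing it. -/
noncomputable def idealHeight {R : Type*} [CommRing R] (I : Ideal R) : ℕ∞ :=
  ⨅ p : {p : PrimeSpectrum R // I ≤ p.asIdeal}, Order.height p.1

/-- In a polynomial ring `P = k[xᵢ : i ∈ I]` over a field in arbitrarily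
many variables, every prime ideal of finite height is finitely generated. -/
theorem prime_of_finite_height_fg
    (k : Type) [Field k] (I : Type) (p : Ideal (MvPolynomial I k))
    (hp : p.IsPrime) (hht : idealHeight p < ⊤) : p.FG := by
  classical
  by_contra hfg
  set x : PrimeSpectrum (MvPolynomial I k) := ⟨p, hp⟩ with hx
  obtain ⟨q, hq⟩ : ∃ q : {p' : PrimeSpectrum (MvPolynomial I k) // p ≤ p'.asIdeal},
      Order.height q.1 < ⊤ := by
    rw [idealHeight] at hht
    exact iInf_lt_iff.mp hht
  have hfin : Order.height x < ⊤ :=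
    lt_of_le_of_lt (Order.height_mono (q.2 : x ≤ q.1)) hq
  obtain ⟨f, hfmono, hflt⟩ : ∃ f : ℕ → PrimeSpectrum (MvPolynomial I k),
      StrictMono f ∧ ∀ n, f n < x := by
    choose Tfun hT using Stmt17.exists_bigger p hfg
    let Sseq : ℕ → Finset I := fun n => Nat.rec ∅ (fun _ S => Tfun S) n
    have hmono : StrictMono (fun n => Stmt17.res p (Sseq n)) :=
      strictMono_nat_of_lt_succ (fun n => hT (Sseq n))
    refine ⟨fun n => ⟨Stmt17.res p (Sseq n), Stmt17.res_isPrime p hp (Sseq n)⟩,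
      fun a b h => (PrimeSpectrum.asIdeal_lt_asIdeal _ _).mp (hmono h), fun n => ?_⟩
    have hne : Stmt17.res p (Sseq n) ≠ p := fun h => hfg (h ▸ Stmt17.res_fg p (Sseq n))
    exact (PrimeSpectrum.asIdeal_lt_asIdeal _ _).mp
      (lt_of_le_of_ne (Stmt17.res_le p (Sseq n)) hne)
  have htop : Order.height x = ⊤ := by
    rw [Order.height_eq_top_iff]
    intro n
    match n with
    | 0 => exact ⟨RelSeries.singleton _ x, rfl, rfl⟩
    | (n+1) =>
      refine ⟨(LTSeries.mk n (fun i => f i) (hfmono.comp Fin.val_strictMono)).snoc x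
        (hflt n), ?_, ?_⟩
      · exact RelSeries.last_snoc _ _ _
      · simp [RelSeries.snoc, LTSeries.mk]
  rw [htop] at hfin
  exact lt_irrefl _ hfin
end

section
/- Let P̂ = S[[x_i : i ∈ I]] be the power series ring over a ring S (the completion of S[x_i : i ∈ I] at (x_i)), and let a ⊆ P̂ be an ideal whose initial ideal in(a) ⊆ S[x_i : i ∈ I] is finitely generated. Then a is finitely generated and closed in P̂ (equal to its topological closure ∩_n (a + ker(P̂ → S[x_i]/( x_i)ⁿ))). -/
variable (k : Type*) [CommRing k] (ι : Type*)

/-- The maximal graded ideal `(xᵢ : i ∈ I)` of the polynomial ring. -/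
noncomputable def mxIdeal : Ideal (MvPolynomial ι k) :=
  Ideal.span (Set.range (MvPolynomial.X : ι → MvPolynomial ι k))

/-- The power series ring `k[[xᵢ : i ∈ I]]`, defined as the completion of the polynomial
ring `k[xᵢ : i ∈ I]` at the ideal `(xᵢ : i ∈ I)`. -/
noncomputable abbrev PowerSeriesRing : Type _ :=
  AdicCompletion (mxIdeal k ι) (MvPolynomial ι k)

/-- The degree-`d` homogeneous component of an element of `k[[xᵢ : i ∈ I]]`, computed
from its residue modulo `(xᵢ)^{d+1}` under the identification `gr ≅ k[xᵢ : i ∈ I]`. -/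
noncomputable def component (d : ℕ) (f : PowerSeriesRing k ι) : MvPolynomial ι k :=
  MvPolynomial.homogeneousComponent d
    (Quotient.out (AdicCompletion.eval (mxIdeal k ι) (MvPolynomial ι k) (d + 1) f))

/-- The order of a power series: the least degree in which it has a nonzero component. -/
noncomputable def ordOf (f : PowerSeriesRing k ι) : ℕ :=
  sInf {d : ℕ | component k ι d f ≠ 0}

/-- The initial form `in(f)` of a power series: its lowest-degree nonzero homogeneous
component, viewed in `k[xᵢ : i ∈ I]`. -/
noncomputable def initialForm (f : PowerSeriesRing k ι) : MvPolynomial ι k :=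
  component k ι (ordOf k ι f) f

/-- The initial ideal `in(a) ⊆ k[xᵢ : i ∈ I]` of an ideal `a ⊆ k[[xᵢ : i ∈ I]]`: the ideal
generated by the initial forms of the nonzero elements of `a`. -/
noncomputable def initialIdeal (a : Ideal (PowerSeriesRing k ι)) : Ideal (MvPolynomial ι k) :=
  Ideal.span {g : MvPolynomial ι k | ∃ f ∈ a, f ≠ 0 ∧ g = initialForm k ι f}


section
open MvPolynomial

namespace Aux18

variable {k ι}

/-- The ideal of polynomials all of whose coefficients in degrees `< n` vanish. -/
def lowVanish (n : ℕ) : Ideal (MvPolynomial ι k) where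
  carrier := { p | ∀ μ : ι →₀ ℕ, μ.degree < n → MvPolynomial.coeff μ p = 0 }
  zero_mem' := fun μ _ => by simp
  add_mem' := fun {p q} hp hq μ hμ => by simp [MvPolynomial.coeff_add, hp μ hμ, hq μ hμ]
  smul_mem' := by
    classical
    intro c p hp μ hμ
    rw [smul_eq_mul, MvPolynomial.coeff_mul]
    apply Finset.sum_eq_zero
    rintro ⟨a, b⟩ hab
    rw [Finset.HasAntidiagonal.mem_antidiagonal] at hab
    have hb : b.degree < n := by
      have : b.degree ≤ μ.degree := by
        rw [← hab, Finsupp.degree_eq_weight_one, map_add]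
        exact Nat.le_add_left _ _
      omega
    simp [hp b hb]

lemma mul_lowVanish_le (j l : ℕ) : lowVanish (ι := ι) (k := k) j * lowVanish l ≤ lowVanish (j + l) := by
  classical
  rw [Ideal.mul_le]
  intro p hp q hq μ hμ
  rw [MvPolynomial.coeff_mul]
  apply Finset.sum_eq_zero
  rintro ⟨a, b⟩ hab
  rw [Finset.HasAntidiagonal.mem_antidiagonal] at hab
  have hdeg : a.degree + b.degree = μ.degree := by
    rw [← hab, Finsupp.degree_eq_weight_one, map_add]
  rcases lt_or_ge a.degree j with h | h
  · simp [hp a h]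
  · have : b.degree < l := by omega
    simp [hq b this]

lemma pow_le_lowVanish (n : ℕ) : (mxIdeal k ι) ^ n ≤ lowVanish n := by
  induction n with
  | zero => intro p _ μ h; omega
  | succ n ih =>
    rw [pow_succ]
    have hX : mxIdeal k ι ≤ lowVanish (ι := ι) (k := k) 1 := by
      rw [mxIdeal, Ideal.span_le]
      rintro _ ⟨i, rfl⟩ μ hμ
      have h : μ.degree = 0 := by omega
      rw [Finsupp.degree_eq_zero_iff] at h
      subst h
      simp [MvPolynomial.coeff_zero_X]
    exact le_trans (Ideal.mul_mono ih hX) (mul_lowVanish_le n 1)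

lemma isHomogeneous_mem_pow {p : MvPolynomial ι k} {d : ℕ} (hp : p.IsHomogeneous d) :
    p ∈ (mxIdeal k ι) ^ d := by
  classical
  have key : ∀ (t : Finset ι) (e : ι →₀ ℕ), (∏ i ∈ t, (X i : MvPolynomial ι k) ^ e i) ∈
      (mxIdeal k ι) ^ (∑ i ∈ t, e i) := by
    intro t e
    induction t using Finset.induction with
    | empty => simp
    | @insert a t hnotmem ih =>
      rw [Finset.prod_insert hnotmem, Finset.sum_insert hnotmem, pow_add]
      exact Ideal.mul_mem_mul (Ideal.pow_mem_pow (Ideal.subset_span (Set.mem_range_self a)) _) ih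
  rw [← MvPolynomial.support_sum_monomial_coeff p]
  apply Ideal.sum_mem
  intro μ hμ
  have hdeg : μ.degree = d := by
    rw [Finsupp.degree_eq_weight_one]; exact hp (MvPolynomial.mem_support_iff.mp hμ)
  rw [MvPolynomial.monomial_eq]
  subst hdeg
  exact Ideal.mul_mem_left _ _ (key μ.support μ)

/-- Membership in `(x_i)^n` is equivalent to vanishing of the homogeneous components of
degree `< n`. -/
lemma mem_pow_iff {p : MvPolynomial ι k} {n : ℕ} :
    p ∈ (mxIdeal k ι) ^ n ↔ ∀ d < n, homogeneousComponent d p = 0 := by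
  constructor
  · intro h d hd
    ext μ
    rw [coeff_homogeneousComponent]
    split_ifs with hmu
    · exact pow_le_lowVanish n h μ (by omega)
    · simp
  · intro h
    rw [← MvPolynomial.sum_homogeneousComponent p]
    apply Ideal.sum_mem
    intro d _
    rcases lt_or_ge d n with hd | hd
    · rw [h d hd]; exact zero_mem _
    · exact (Ideal.pow_le_pow_right hd) (isHomogeneous_mem_pow (homogeneousComponent_isHomogeneous d p))

end Aux18

namespace Aux18

variable {k ι}

lemma smul_top_eq (n : ℕ) :
    ((mxIdeal k ι) ^ n • ⊤ : Ideal (MvPolynomial ι k)) = (mxIdeal k ι) ^ n := by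
  ext x; simp

lemma mem_smul_top_iff (n : ℕ) (x : MvPolynomial ι k) :
    x ∈ ((mxIdeal k ι) ^ n • ⊤ : Ideal (MvPolynomial ι k)) ↔ x ∈ (mxIdeal k ι) ^ n := by
  rw [smul_top_eq]

lemma val_out (f : PowerSeriesRing k ι) (n : ℕ) :
    Submodule.Quotient.mk (Quotient.out (f.val n)) = f.val n := by
  rw [← Submodule.Quotient.mk''_eq_mk]
  exact Quotient.out_eq' _

/-- `component` is independent of the level at which it is computed. -/
lemma comp_spec {d n : ℕ} (hdn : d < n) (f : PowerSeriesRing k ι) {p : MvPolynomial ι k}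
    (hp : f.val n = Submodule.Quotient.mk p) :
    component k ι d f = MvPolynomial.homogeneousComponent d p := by
  have h1 : f.val (d + 1) =
      Submodule.Quotient.mk (p := ((mxIdeal k ι) ^ (d+1) • ⊤ : Ideal (MvPolynomial ι k))) p := by
    rw [← f.property (show d + 1 ≤ n by omega), hp]; rfl
  have h2 : Submodule.Quotient.mk (p := ((mxIdeal k ι) ^ (d+1) • ⊤ : Ideal (MvPolynomial ι k)))
      (Quotient.out (f.val (d+1))) = Submodule.Quotient.mk p := by
    rw [val_out, h1]
  have h3 : Quotient.out (f.val (d+1)) - p ∈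
      ((mxIdeal k ι) ^ (d+1) • ⊤ : Ideal (MvPolynomial ι k)) :=
    Submodule.Quotient.eq _ |>.mp h2
  rw [mem_smul_top_iff] at h3
  have h4 := (mem_pow_iff.mp h3) d (by omega)
  rw [map_sub] at h4
  have := sub_eq_zero.mp h4
  rw [component]
  exact this

lemma val_eq_zero_iff (f : PowerSeriesRing k ι) (n : ℕ) :
    f.val n = 0 ↔ ∀ d < n, component k ι d f = 0 := by
  have hmk : f.val n = Submodule.Quotient.mk (Quotient.out (f.val n)) := (val_out f n).symm
  constructor
  · intro h d hd
    rw [comp_spec hd f hmk]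
    have : Quotient.out (f.val n) ∈
        ((mxIdeal k ι) ^ n • ⊤ : Ideal (MvPolynomial ι k)) := by
      rw [← Submodule.Quotient.mk_eq_zero, val_out, h]
    rw [mem_smul_top_iff] at this
    exact mem_pow_iff.mp this d hd
  · intro h
    have : Quotient.out (f.val n) ∈ (mxIdeal k ι) ^ n := by
      rw [mem_pow_iff]
      intro d hd
      rw [← comp_spec hd f hmk]
      exact h d hd
    rw [hmk, Submodule.Quotient.mk_eq_zero, mem_smul_top_iff]
    exact this

lemma comp_of (p : MvPolynomial ι k) (d : ℕ) :
    component k ι d (AdicCompletion.of (mxIdeal k ι) (MvPolynomial ι k) p)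
      = MvPolynomial.homogeneousComponent d p :=
  comp_spec (Nat.lt_succ_self d) _ rfl

lemma comp_zero (d : ℕ) : component k ι d (0 : PowerSeriesRing k ι) = 0 := by
  have := val_eq_zero_iff (0 : PowerSeriesRing k ι) (d + 1)
  exact this.mp rfl d (Nat.lt_succ_self d)

lemma mul_val_zero {x y : PowerSeriesRing k ι} {j l : ℕ}
    (hx : x.val j = 0) (hy : y.val l = 0) : (x * y).val (j + l) = 0 := by
  set p := Quotient.out (x.val (j + l)) with hp
  set q := Quotient.out (y.val (j + l)) with hq
  have hpm : p ∈ (mxIdeal k ι) ^ j := by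
    rw [mem_pow_iff]
    intro d hd
    rw [← comp_spec (show d < j + l by omega) x (val_out x (j+l)).symm]
    exact (val_eq_zero_iff x j).mp hx d hd
  have hqm : q ∈ (mxIdeal k ι) ^ l := by
    rw [mem_pow_iff]
    intro d hd
    rw [← comp_spec (show d < j + l by omega) y (val_out y (j+l)).symm]
    exact (val_eq_zero_iff y l).mp hy d hd
  have : (x * y).val (j + l) = Submodule.Quotient.mk (p * q) := by
    rw [AdicCompletion.val_mul, ← val_out x (j+l), ← val_out y (j+l)]
    rfl
  rw [this, Submodule.Quotient.mk_eq_zero, mem_smul_top_iff]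
  have h5 := Ideal.mul_mem_mul hpm hqm
  rwa [← pow_add] at h5

end Aux18

namespace Aux18

variable {k ι}

lemma ord_spec {f : PowerSeriesRing k ι} {n : ℕ} (h0 : f.val n = 0)
    (hn : component k ι n f ≠ 0) : ordOf k ι f = n := by
  have hmem : n ∈ {d | component k ι d f ≠ 0} := hn
  refine le_antisymm (Nat.sInf_le hmem) (le_csInf ⟨n, hmem⟩ ?_)
  intro m hm
  by_contra hlt
  exact hm ((val_eq_zero_iff f n).mp h0 m (by omega))

lemma comp_lt_ord (f : PowerSeriesRing k ι) {d : ℕ} (hd : d < ordOf k ι f) :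
    component k ι d f = 0 := by
  by_contra h
  have hle : ordOf k ι f ≤ d := Nat.sInf_le h
  omega

lemma val_ord_eq_zero (f : PowerSeriesRing k ι) : f.val (ordOf k ι f) = 0 :=
  (val_eq_zero_iff _ _).mpr fun _ hd => comp_lt_ord f hd

lemma val_zero_of_le {f : PowerSeriesRing k ι} {n N : ℕ} (hnN : n ≤ N)
    (h : f.val N = 0) : f.val n = 0 := by
  rw [← f.property hnN, h, map_zero]

lemma comp_add (d : ℕ) (x y : PowerSeriesRing k ι) :
    component k ι d (x + y) = component k ι d x + component k ι d y := by
  have : (x + y).val (d+1) = Submodule.Quotient.mk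
      (Quotient.out (x.val (d+1)) + Quotient.out (y.val (d+1))) := by
    rw [AdicCompletion.val_add_apply, Submodule.Quotient.mk_add, val_out, val_out]
  rw [comp_spec (Nat.lt_succ_self d) _ this, map_add,
    ← comp_spec (Nat.lt_succ_self d) x (val_out x (d+1)).symm,
    ← comp_spec (Nat.lt_succ_self d) y (val_out y (d+1)).symm]

lemma comp_sub (d : ℕ) (x y : PowerSeriesRing k ι) :
    component k ι d (x - y) = component k ι d x - component k ι d y := by
  have : (x - y).val (d+1) = Submodule.Quotient.mk
      (Quotient.out (x.val (d+1)) - Quotient.out (y.val (d+1))) := by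
    rw [AdicCompletion.val_sub_apply, Submodule.Quotient.mk_sub, val_out, val_out]
  rw [comp_spec (Nat.lt_succ_self d) _ this, map_sub,
    ← comp_spec (Nat.lt_succ_self d) x (val_out x (d+1)).symm,
    ← comp_spec (Nat.lt_succ_self d) y (val_out y (d+1)).symm]

lemma comp_sum {σ : Type*} (s : Finset σ) (x : σ → PowerSeriesRing k ι) (d : ℕ) :
    component k ι d (∑ g ∈ s, x g) = ∑ g ∈ s, component k ι d (x g) := by
  classical
  induction s using Finset.induction with
  | empty => simpa using comp_zero d
  | @insert a t ha ih => rw [Finset.sum_insert ha, Finset.sum_insert ha, comp_add, ih]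

lemma mem_ker_evalₐ {x : PowerSeriesRing k ι} {n : ℕ} :
    x ∈ RingHom.ker (AdicCompletion.evalₐ (mxIdeal k ι) n) ↔ x.val n = 0 := by
  rw [RingHom.mem_ker]
  simp only [AdicCompletion.evalₐ, AlgHom.comp_apply, AlgHom.coe_coe]
  rw [AlgEquiv.coe_algHom, EmbeddingLike.map_eq_zero_iff]
  rfl

lemma homogeneousComponent_mul_right {q : MvPolynomial ι k} {d : ℕ} (hq : q.IsHomogeneous d)
    (c : MvPolynomial ι k) (n : ℕ) :
    MvPolynomial.homogeneousComponent n (c * q) =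
      if d ≤ n then MvPolynomial.homogeneousComponent (n - d) c * q else 0 := by
  conv_lhs => rw [← MvPolynomial.sum_homogeneousComponent c]
  rw [Finset.sum_mul, map_sum]
  have key : ∀ e, MvPolynomial.homogeneousComponent n
        (MvPolynomial.homogeneousComponent e c * q)
      = if d ≤ n ∧ e = n - d then MvPolynomial.homogeneousComponent e c * q else 0 := by
    intro e
    have hh : (MvPolynomial.homogeneousComponent e c * q).IsHomogeneous (e + d) :=
      (MvPolynomial.homogeneousComponent_isHomogeneous e c).mul hq
    rw [MvPolynomial.homogeneousComponent_of_mem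
      ((MvPolynomial.mem_homogeneousSubmodule _ _).mpr hh)]
    by_cases hc : d ≤ n ∧ e = n - d
    · obtain ⟨h1, h2⟩ := hc
      subst h2
      rw [if_pos (show n = n - d + d by omega), if_pos ⟨h1, rfl⟩]
    · rw [if_neg (show ¬ n = e + d by omega), if_neg hc]
  simp_rw [key]
  by_cases hdn : d ≤ n
  · rw [if_pos hdn]
    simp only [hdn, true_and]
    rw [Finset.sum_ite_eq' (Finset.range (c.totalDegree + 1)) (n - d)
      (fun e => MvPolynomial.homogeneousComponent e c * q)]
    split_ifs with h
    · rfl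
    · rw [Finset.mem_range, not_lt] at h
      rw [MvPolynomial.homogeneousComponent_eq_zero _ c (by omega), zero_mul]
  · rw [if_neg hdn]
    simp [hdn]

lemma comp_of_mul {h : MvPolynomial ι k} {e : ℕ} (hh : h.IsHomogeneous e)
    (f : PowerSeriesRing k ι) {n : ℕ} (hen : e ≤ n) :
    component k ι n (AdicCompletion.of (mxIdeal k ι) (MvPolynomial ι k) h * f)
      = h * component k ι (n - e) f := by
  set p := Quotient.out (f.val (n+1)) with hp
  have hval : (AdicCompletion.of (mxIdeal k ι) (MvPolynomial ι k) h * f).val (n+1)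
      = Submodule.Quotient.mk (h * p) := by
    rw [AdicCompletion.val_mul, ← val_out f (n+1)]
    rfl
  rw [comp_spec (Nat.lt_succ_self n) _ hval, mul_comm h p,
    homogeneousComponent_mul_right hh p n, if_pos hen, mul_comm]
  congr 1
  exact (comp_spec (show n - e < n + 1 by omega) f (val_out f (n+1)).symm).symm

end Aux18

namespace Aux18

variable {k ι}

lemma initial_mem {a : Ideal (PowerSeriesRing k ι)} {f : PowerSeriesRing k ι}
    (hf : f ∈ ⨅ n : ℕ, (a ⊔ RingHom.ker (AdicCompletion.evalₐ (mxIdeal k ι) n)))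
    {n : ℕ} (hval : f.val n = 0) (hcomp : component k ι n f ≠ 0) :
    component k ι n f ∈ {g : MvPolynomial ι k | ∃ f' ∈ a, f' ≠ 0 ∧ g = initialForm k ι f'} := by
  have hf' : f ∈ a ⊔ RingHom.ker (AdicCompletion.evalₐ (mxIdeal k ι) (n+1)) :=
    (Submodule.mem_iInf _).mp hf (n+1)
  obtain ⟨y, hy, z, hz, hyz⟩ := Submodule.mem_sup.mp hf'
  have hzval : z.val (n+1) = 0 := mem_ker_evalₐ.mp hz
  have hzcomp : component k ι n z = 0 := (val_eq_zero_iff z (n+1)).mp hzval n (by omega)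
  have hcompy : component k ι n y = component k ι n f := by
    rw [← hyz, comp_add, hzcomp, add_zero]
  have hyval : y.val n = 0 := by
    have h' : y = f - z := by rw [← hyz]; ring
    rw [h', AdicCompletion.val_sub_apply, hval, val_zero_of_le (Nat.le_succ n) hzval, sub_zero]
  have hy0 : y ≠ 0 := by
    intro h
    rw [h, comp_zero] at hcompy
    exact hcomp hcompy.symm
  refine ⟨y, hy, hy0, ?_⟩
  rw [initialForm, ord_spec hyval (by rw [hcompy]; exact hcomp)]
  exact hcompy.symm

lemma step {a : Ideal (PowerSeriesRing k ι)} {σ : Type*} [Fintype σ]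
    (F : σ → PowerSeriesRing k ι)
    (hspan : initialIdeal k ι a ≤ Ideal.span (Set.range fun g => initialForm k ι (F g)))
    {f : PowerSeriesRing k ι}
    (hf : f ∈ ⨅ n : ℕ, (a ⊔ RingHom.ker (AdicCompletion.evalₐ (mxIdeal k ι) n)))
    {n : ℕ} (hval : f.val n = 0) :
    ∃ h : σ → MvPolynomial ι k,
      (∀ g, h g ∈ (mxIdeal k ι) ^ (n - ordOf k ι (F g))) ∧
      (f - ∑ g, AdicCompletion.of (mxIdeal k ι) (MvPolynomial ι k) (h g) * F g).val (n+1)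
        = 0 := by
  classical
  by_cases h1 : f.val (n+1) = 0
  · exact ⟨0, fun g => zero_mem _, by simpa using h1⟩
  · have hcomp : component k ι n f ≠ 0 := by
      intro h
      apply h1
      rw [val_eq_zero_iff]
      intro e he
      rcases Nat.lt_succ_iff_lt_or_eq.mp he with h' | h'
      · exact (val_eq_zero_iff f n).mp hval e h'
      · rwa [h']
    have hmem : component k ι n f ∈ Ideal.span (Set.range fun g => initialForm k ι (F g)) :=
      hspan (Ideal.subset_span (initial_mem hf hval hcomp))
    obtain ⟨c, hc⟩ := Ideal.mem_span_range_iff_exists_fun.mp hmem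
    set h : σ → MvPolynomial ι k := fun g =>
      if ordOf k ι (F g) ≤ n
      then MvPolynomial.homogeneousComponent (n - ordOf k ι (F g)) (c g) else 0 with hh
    have hmem2 : ∀ g, h g ∈ (mxIdeal k ι) ^ (n - ordOf k ι (F g)) := by
      intro g
      rw [hh]
      by_cases hg : ordOf k ι (F g) ≤ n
      · simp only [hg, if_true]
        exact isHomogeneous_mem_pow (MvPolynomial.homogeneousComponent_isHomogeneous _ _)
      · simp only [hg, if_false]
        exact zero_mem _
    refine ⟨h, hmem2, ?_⟩
    have hterm : ∀ g,
        ((AdicCompletion.of (mxIdeal k ι) (MvPolynomial ι k) (h g) * F g)).val n = 0 := by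
      intro g
      have hx : (AdicCompletion.of (mxIdeal k ι) (MvPolynomial ι k) (h g)).val
          (n - ordOf k ι (F g)) = 0 := by
        have : (AdicCompletion.of (mxIdeal k ι) (MvPolynomial ι k) (h g)).val
            (n - ordOf k ι (F g)) = Submodule.Quotient.mk (h g) := rfl
        rw [this, Submodule.Quotient.mk_eq_zero, mem_smul_top_iff]
        exact hmem2 g
      have := mul_val_zero hx (val_ord_eq_zero (F g))
      exact val_zero_of_le (by omega) this
    rw [val_eq_zero_iff]
    intro e he
    rw [comp_sub, comp_sum]
    rcases Nat.lt_succ_iff_lt_or_eq.mp he with h' | h'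
    · rw [(val_eq_zero_iff f n).mp hval e h']
      rw [Finset.sum_eq_zero fun g _ => (val_eq_zero_iff _ n).mp (hterm g) e h', sub_zero]
    · subst h'
      have hgterm : ∀ g, component k ι e
          (AdicCompletion.of (mxIdeal k ι) (MvPolynomial ι k) (h g) * F g)
          = MvPolynomial.homogeneousComponent e (c g * initialForm k ι (F g)) := by
        intro g
        have hqg : (initialForm k ι (F g)).IsHomogeneous (ordOf k ι (F g)) :=
          MvPolynomial.homogeneousComponent_isHomogeneous _ _
        rw [homogeneousComponent_mul_right hqg (c g) e]
        by_cases hg : ordOf k ι (F g) ≤ e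
        · rw [if_pos hg, hh]
          simp only [hg, if_true]
          have hhg : (MvPolynomial.homogeneousComponent (e - ordOf k ι (F g)) (c g)).IsHomogeneous
              (e - ordOf k ι (F g)) := MvPolynomial.homogeneousComponent_isHomogeneous _ _
          rw [comp_of_mul hhg (F g) (by omega)]
          congr 1
          rw [Nat.sub_sub_self hg]
          rfl
        · rw [if_neg hg, hh]
          simp only [hg, if_false]
          rw [map_zero, zero_mul, comp_zero]
      rw [Finset.sum_congr rfl fun g _ => hgterm g, ← map_sum, hc]
      have hidem : MvPolynomial.homogeneousComponent e (component k ι e f)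
          = component k ι e f := by
        rw [component, MvPolynomial.homogeneousComponent_of_mem
          (MvPolynomial.homogeneousComponent_mem _ _), if_pos rfl]
      rw [hidem, sub_self]

end Aux18

namespace Aux18

variable {k ι}

set_option maxHeartbeats 1000000 in
lemma closure_le_span {a : Ideal (PowerSeriesRing k ι)} {σ : Type*} [Fintype σ]
    (F : σ → PowerSeriesRing k ι) (hFa : ∀ g, F g ∈ a)
    (hspan : initialIdeal k ι a ≤ Ideal.span (Set.range fun g => initialForm k ι (F g))) :
    (⨅ n : ℕ, (a ⊔ RingHom.ker (AdicCompletion.evalₐ (mxIdeal k ι) n)))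
      ≤ Ideal.span (Set.range F) := by
  classical
  intro f hf
  have hrem : ∀ q : σ → MvPolynomial ι k,
      (f - ∑ g, AdicCompletion.of (mxIdeal k ι) (MvPolynomial ι k) (q g) * F g)
        ∈ ⨅ n : ℕ, (a ⊔ RingHom.ker (AdicCompletion.evalₐ (mxIdeal k ι) n)) := by
    intro q
    refine Submodule.sub_mem _ hf ((Submodule.mem_iInf _).mpr fun n => ?_)
    exact Submodule.mem_sup_left (Ideal.sum_mem _ fun g _ => Ideal.mul_mem_left _ _ (hFa g))
  have stepEx : ∀ (n : ℕ) (q : σ → MvPolynomial ι k),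
      (f - ∑ g, AdicCompletion.of (mxIdeal k ι) (MvPolynomial ι k) (q g) * F g).val n = 0 →
      ∃ q' : σ → MvPolynomial ι k,
        ((f - ∑ g, AdicCompletion.of (mxIdeal k ι) (MvPolynomial ι k) (q' g) * F g).val (n+1)
          = 0) ∧
        ∀ g, q' g - q g ∈ (mxIdeal k ι) ^ (n - ordOf k ι (F g)) := by
    intro n q hq
    obtain ⟨h, hmem, hval⟩ := step F hspan (hrem q) hq
    refine ⟨fun g => q g + h g, ?_, fun g => by simpa using hmem g⟩
    have heq : (f - ∑ g, AdicCompletion.of (mxIdeal k ι) (MvPolynomial ι k) (q g + h g) * F g)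
        = ((f - ∑ g, AdicCompletion.of (mxIdeal k ι) (MvPolynomial ι k) (q g) * F g)
          - ∑ g, AdicCompletion.of (mxIdeal k ι) (MvPolynomial ι k) (h g) * F g) := by
      simp_rw [map_add, add_mul]
      rw [Finset.sum_add_distrib]
      ring
    rw [heq]
    exact hval
  choose stp hstp1 hstp2 using stepEx
  obtain ⟨q, hqval, hincr⟩ : ∃ q : ℕ → σ → MvPolynomial ι k,
      (∀ n, (f - ∑ g, AdicCompletion.of (mxIdeal k ι) (MvPolynomial ι k) (q n g) * F g).val n
        = 0) ∧
      ∀ n g, q (n+1) g - q n g ∈ (mxIdeal k ι) ^ (n - ordOf k ι (F g)) := by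
    let seq : ∀ n : ℕ, {q : σ → MvPolynomial ι k //
        (f - ∑ g, AdicCompletion.of (mxIdeal k ι) (MvPolynomial ι k) (q g) * F g).val n = 0} :=
      fun n => Nat.rec
        ⟨0, (val_eq_zero_iff _ 0).mpr (fun e he => absurd he (Nat.not_lt_zero e))⟩
        (fun n ih => ⟨stp n ih.1 ih.2, hstp1 n ih.1 ih.2⟩) n
    exact ⟨fun n => (seq n).1, fun n => (seq n).2, fun n g => hstp2 n (seq n).1 (seq n).2 g⟩
  have htel : ∀ g n N, n ≤ N → q N g - q n g ∈ (mxIdeal k ι) ^ (n - ordOf k ι (F g)) := by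
    intro g n N hnN
    induction N, hnN using Nat.le_induction with
    | base => simpa using zero_mem _
    | succ N hnN ih =>
      have h2 : q (N+1) g - q N g ∈ (mxIdeal k ι) ^ (n - ordOf k ι (F g)) :=
        Ideal.pow_le_pow_right (Nat.sub_le_sub_right hnN _) (hincr N g)
      have h3 : q (N+1) g - q n g = (q (N+1) g - q N g) + (q N g - q n g) :=
        (sub_add_sub_cancel _ _ _).symm
      rw [h3]
      exact add_mem h2 ih
  have hcauchy : ∀ g n, q (n + ordOf k ι (F g)) g ≡ q (n + 1 + ordOf k ι (F g)) g
      [SMOD ((mxIdeal k ι) ^ n • ⊤ : Ideal (MvPolynomial ι k))] := by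
    intro g n
    rw [SModEq.sub_mem]
    have h4 := htel g (n + ordOf k ι (F g)) (n + 1 + ordOf k ι (F g)) (by omega)
    rw [Nat.add_sub_cancel] at h4
    have h5 := neg_mem h4
    rw [neg_sub] at h5
    rw [mem_smul_top_iff]
    exact h5
  set Q : σ → PowerSeriesRing k ι := fun g =>
    AdicCompletion.mk (mxIdeal k ι) (MvPolynomial ι k)
      (AdicCompletion.AdicCauchySequence.mk (mxIdeal k ι) (MvPolynomial ι k)
        (fun n => q (n + ordOf k ι (F g)) g) (hcauchy g)) with hQ
  have hQval : ∀ g n, (Q g).val n = Submodule.Quotient.mk (q (n + ordOf k ι (F g)) g) :=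
    fun g n => rfl
  have hfinal : f = ∑ g, Q g * F g := by
    rw [← sub_eq_zero]
    apply AdicCompletion.ext
    intro n
    rw [AdicCompletion.val_zero_apply]
    have hsplit : f - ∑ g, Q g * F g
        = (f - ∑ g, AdicCompletion.of (mxIdeal k ι) (MvPolynomial ι k) (q n g) * F g)
          - ∑ g, (Q g - AdicCompletion.of (mxIdeal k ι) (MvPolynomial ι k) (q n g)) * F g := by
      simp_rw [sub_mul]
      rw [Finset.sum_sub_distrib]
      ring
    rw [hsplit, AdicCompletion.val_sub_apply, hqval n, zero_sub, neg_eq_zero, AdicCompletion.val_sum_apply]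
    refine Finset.sum_eq_zero fun g _ => ?_
    have hx : (Q g - AdicCompletion.of (mxIdeal k ι) (MvPolynomial ι k) (q n g)).val
        (n - ordOf k ι (F g)) = 0 := by
      by_cases hg : ordOf k ι (F g) ≤ n
      · have h6 : (Q g).val (n - ordOf k ι (F g))
            = Submodule.Quotient.mk (q (n - ordOf k ι (F g) + ordOf k ι (F g)) g) := hQval g _
        have h7 : n - ordOf k ι (F g) + ordOf k ι (F g) = n := Nat.sub_add_cancel hg
        rw [AdicCompletion.val_sub_apply, h6, h7]
        have h8 : (AdicCompletion.of (mxIdeal k ι) (MvPolynomial ι k) (q n g)).val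
            (n - ordOf k ι (F g)) = Submodule.Quotient.mk (q n g) := rfl
        rw [h8, sub_self]
      · have h9 : n - ordOf k ι (F g) = 0 := by omega
        rw [h9, val_eq_zero_iff]
        exact fun e he => absurd he (Nat.not_lt_zero e)
    have h10 := mul_val_zero hx (val_ord_eq_zero (F g))
    exact val_zero_of_le (by omega) h10
  rw [hfinal]
  exact Ideal.sum_mem _ fun g _ =>
    Ideal.mul_mem_left _ _ (Ideal.subset_span (Set.mem_range_self g))

end Aux18

end

set_option maxHeartbeats 1000000

/-- Let `P̂ = S[[xᵢ : i ∈ I]]` be the power series ring over a ring `S`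
(the completion of `S[xᵢ : i ∈ I]` at `(xᵢ)`).  If `a ⊆ P̂` is an ideal whose initial
ideal `in(a) ⊆ S[xᵢ : i ∈ I]` is finitely generated, then `a` is finitely generated and
closed in `P̂`, i.e. equal to its topological closure `⋂ₙ (a + ker(P̂ → S[xᵢ]/(xᵢ)ⁿ))`. -/
theorem fg_and_closed_of_initialIdeal_fg
    (S : Type*) [CommRing S] (I : Type*) (a : Ideal (PowerSeriesRing S I))
    (hfg : (initialIdeal S I a).FG) :
    a.FG ∧ a = ⨅ n : ℕ, (a ⊔ RingHom.ker (AdicCompletion.evalₐ (mxIdeal S I) n)) := by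
  classical
  obtain ⟨T, hT⟩ := hfg
  have hTsub : ∀ t : {x // x ∈ T}, ∃ u : Finset (MvPolynomial I S),
      (↑u : Set (MvPolynomial I S)) ⊆
        {g | ∃ f ∈ a, f ≠ 0 ∧ g = initialForm S I f} ∧
      (t : MvPolynomial I S) ∈ Ideal.span (↑u : Set (MvPolynomial I S)) := by
    intro t
    have ht : (t : MvPolynomial I S) ∈ initialIdeal S I a := by
      rw [← hT]; exact Ideal.subset_span t.2
    rw [initialIdeal] at ht
    exact Submodule.mem_span_finite_of_mem_span ht
  choose u hu1 hu2 using hTsub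
  set G : Finset (MvPolynomial I S) := T.attach.biUnion u with hG
  have hGsub : (↑G : Set (MvPolynomial I S)) ⊆
      {g | ∃ f ∈ a, f ≠ 0 ∧ g = initialForm S I f} := by
    intro x hx
    rw [hG, Finset.mem_coe, Finset.mem_biUnion] at hx
    obtain ⟨t, _, hxt⟩ := hx
    exact hu1 t (Finset.mem_coe.mpr hxt)
  have hspanG : initialIdeal S I a ≤ Ideal.span (↑G : Set (MvPolynomial I S)) := by
    rw [← hT, Ideal.span_le]
    intro t ht
    refine Ideal.span_mono ?_ (hu2 ⟨t, ht⟩)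
    intro x hx
    rw [Finset.mem_coe] at hx ⊢
    rw [hG]
    exact Finset.mem_biUnion.mpr ⟨⟨t, ht⟩, Finset.mem_attach _ _, hx⟩
  have hex : ∀ g : {x // x ∈ G}, ∃ f : PowerSeriesRing S I,
      f ∈ a ∧ f ≠ 0 ∧ (g : MvPolynomial I S) = initialForm S I (f) := fun g => hGsub g.2
  choose F hFa hF0 hFin using hex
  have hspan : initialIdeal S I a
      ≤ Ideal.span (Set.range fun g => initialForm S I (F g)) := by
    refine le_trans hspanG (Ideal.span_le.mpr ?_)
    intro x hx
    exact Ideal.subset_span ⟨⟨x, Finset.mem_coe.mp hx⟩, (hFin ⟨x, Finset.mem_coe.mp hx⟩).symm⟩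
  have hle1 : a ≤ ⨅ n : ℕ, (a ⊔ RingHom.ker (AdicCompletion.evalₐ (mxIdeal S I) n)) :=
    le_iInf fun n => le_sup_left
  have hle2 := Aux18.closure_le_span F hFa hspan
  have hle3 : Ideal.span (Set.range F) ≤ a := by
    rw [Ideal.span_le]
    rintro _ ⟨g, rfl⟩
    exact hFa g
  refine ⟨?_, le_antisymm hle1 (le_trans hle2 hle3)⟩
  have hEq : a = Ideal.span (Set.range F) :=
    le_antisymm (le_trans hle1 hle2) hle3
  rw [hEq]
  exact ⟨(Set.finite_range F).toFinset, by rw [Set.Finite.coe_toFinset]⟩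
end
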